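/- arXiv:2204.04709 — 5 statements merged into one kernel-verified Lean document; each statement's English description precedes it below -/
import Mathlib

section
/- Let a,b,p ∈ ℝ, c not a nonpositive integer, θ ∈ [-1,1], and let u_n = Σ_{k=0}^{n} ((a)_k (b)_k)/(k!(c)_k)·θ^{n-k}(-p)_{n-k}/(n-k)! be the power series coefficients of (1-θx)^p F(a,b;c;x). Then for all n ≥ 2, (n+1)(n+c)·u_{n+1} = ξ_n·u_n - θ·η_n·u_{n-1} + θ²·λ_n·u_{n-2}, where ξ_n = (n+a)(n+b) + θ[2n² - 2n(p-c+1) - cp], η_n = 2n² + 2(a+b-p-2)n - (a+b-1)p + 2(a-1)(b-1) + θ(n-p-1)(n-p+c-2), and λ_n = (n+a-p-2)(n+b-p-2). -/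
open Polynomial

/-- Pochhammer symbol `(a)_n` for real `a`. -/
noncomputable def poch (a : ℝ) (n : ℕ) : ℝ := (ascPochhammer ℝ n).eval a

/-- Gaussian hypergeometric function `F(a,b;c;z)`. -/
noncomputable def hypF (a b c z : ℝ) : ℝ :=
  ∑' n : ℕ, poch a n * poch b n / poch c n * z ^ n / n.factorial

noncomputable def fc (a b c : ℝ) (k : ℕ) : ℝ :=
  poch a k * poch b k / (k.factorial * poch c k)

noncomputable def gc (p θ : ℝ) (m : ℕ) : ℝ :=
  θ ^ m * poch (-p) m / m.factorial

noncomputable def uS (a b c p θ : ℝ) (n : ℕ) : ℝ :=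
  ∑ k ∈ Finset.range (n + 1), fc a b c k * gc p θ (n - k)

noncomputable def sS (a b c p θ : ℝ) (n : ℕ) : ℝ :=
  ∑ k ∈ Finset.range (n + 1), (k : ℝ) * fc a b c k * gc p θ (n - k)

noncomputable def tS (a b c p θ : ℝ) (n : ℕ) : ℝ :=
  ∑ k ∈ Finset.range (n + 1), (k : ℝ) ^ 2 * fc a b c k * gc p θ (n - k)

lemma poch_succ (x : ℝ) (n : ℕ) : poch x (n + 1) = poch x n * (x + n) := by
  simp [poch, ascPochhammer_succ_right]

lemma poch_ne_zero {c : ℝ} (hc : ∀ n : ℕ, c ≠ -(n : ℝ)) (k : ℕ) : poch c k ≠ 0 := by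
  induction k with
  | zero => simp [poch]
  | succ n ih =>
      rw [poch_succ]
      refine mul_ne_zero ih ?_
      intro h
      exact hc n (by linarith)

lemma gkey (p θ : ℝ) (m : ℕ) :
    ((m : ℝ) + 1) * gc p θ (m + 1) = θ * ((m : ℝ) - p) * gc p θ m := by
  have hm : (m.factorial : ℝ) ≠ 0 := Nat.cast_ne_zero.mpr m.factorial_ne_zero
  have hm1 : (m : ℝ) + 1 ≠ 0 := by positivity
  rw [gc, gc, poch_succ, Nat.factorial_succ, pow_succ]
  push_cast
  field_simp
  ring

lemma fkey (a b : ℝ) {c : ℝ} (hc : ∀ n : ℕ, c ≠ -(n : ℝ)) (k : ℕ) :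
    ((k : ℝ) + 1) * ((k : ℝ) + c) * fc a b c (k + 1)
      = ((k : ℝ) + a) * ((k : ℝ) + b) * fc a b c k := by
  have h1 : poch c k ≠ 0 := poch_ne_zero hc k
  have h2 : c + (k : ℝ) ≠ 0 := by
    intro h; exact hc k (by linarith)
  have h3 : (k.factorial : ℝ) ≠ 0 := Nat.cast_ne_zero.mpr k.factorial_ne_zero
  have h4 : (k : ℝ) + 1 ≠ 0 := by positivity
  rw [fc, fc, poch_succ, poch_succ, poch_succ, Nat.factorial_succ]
  push_cast
  field_simp
  ring

lemma shift_g (p θ : ℝ) (q : ℕ → ℝ) (N : ℕ) :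
    ∑ k ∈ Finset.range (N + 1), ((N : ℝ) + 1 - (k : ℝ)) * q k * gc p θ (N + 1 - k)
      = ∑ k ∈ Finset.range (N + 1), θ * ((N : ℝ) - (k : ℝ) - p) * q k * gc p θ (N - k) := by
  refine Finset.sum_congr rfl ?_
  intro k hk
  have hk' : k ≤ N := Nat.lt_succ_iff.mp (Finset.mem_range.mp hk)
  have h1 : N + 1 - k = (N - k) + 1 := by omega
  have h2 : ((N - k : ℕ) : ℝ) = (N : ℝ) - (k : ℝ) := by
    rw [Nat.cast_sub hk']
  have hg := gkey p θ (N - k)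
  rw [h2] at hg
  rw [h1]
  linear_combination q k * hg

lemma shift_f (a b : ℝ) {c : ℝ} (p θ : ℝ) (hc : ∀ n : ℕ, c ≠ -(n : ℝ)) (q : ℕ → ℝ) (N : ℕ) :
    ∑ k ∈ Finset.range (N + 2), q k * ((k : ℝ) * ((k : ℝ) - 1 + c)) * fc a b c k * gc p θ (N + 1 - k)
      = ∑ k ∈ Finset.range (N + 1),
          q (k + 1) * (((k : ℝ) + a) * ((k : ℝ) + b)) * fc a b c k * gc p θ (N - k) := by
  rw [Finset.sum_range_succ']
  simp only [Nat.cast_zero, Nat.cast_add, Nat.cast_one]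
  rw [show (0:ℝ) * ((0:ℝ) - 1 + c) = 0 by ring]
  simp only [mul_zero, zero_mul, add_zero]
  refine Finset.sum_congr rfl ?_
  intro k hk
  have h1 : N + 1 - (k + 1) = N - k := by omega
  have hf := fkey a b hc k
  rw [h1]
  linear_combination q (k + 1) * gc p θ (N - k) * hf

lemma e1 (a b c p θ : ℝ) (N : ℕ) :
    ((N : ℝ) + 1) * uS a b c p θ (N + 1) - sS a b c p θ (N + 1)
      = θ * ((N : ℝ) - p) * uS a b c p θ N - θ * sS a b c p θ N := by
  have key := shift_g p θ (fun k => fc a b c k) N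
  calc ((N : ℝ) + 1) * uS a b c p θ (N + 1) - sS a b c p θ (N + 1)
      = ∑ k ∈ Finset.range (N + 2),
          ((N : ℝ) + 1 - (k : ℝ)) * fc a b c k * gc p θ (N + 1 - k) := by
        rw [uS, sS, Finset.mul_sum, ← Finset.sum_sub_distrib]
        exact Finset.sum_congr rfl (fun k _ => by ring)
    _ = ∑ k ∈ Finset.range (N + 1),
          ((N : ℝ) + 1 - (k : ℝ)) * fc a b c k * gc p θ (N + 1 - k) := by
        rw [Finset.sum_range_succ]
        have : ((N : ℝ) + 1 - ((N + 1 : ℕ) : ℝ)) = 0 := by push_cast; ring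
        rw [this]
        ring
    _ = ∑ k ∈ Finset.range (N + 1),
          θ * ((N : ℝ) - (k : ℝ) - p) * fc a b c k * gc p θ (N - k) := key
    _ = θ * ((N : ℝ) - p) * uS a b c p θ N - θ * sS a b c p θ N := by
        rw [uS, sS, Finset.mul_sum, Finset.mul_sum, ← Finset.sum_sub_distrib]
        exact Finset.sum_congr rfl (fun k _ => by ring)

lemma e2 (a b c p θ : ℝ) (N : ℕ) :
    ((N : ℝ) + 1) * sS a b c p θ (N + 1) - tS a b c p θ (N + 1)
      = θ * ((N : ℝ) - p) * sS a b c p θ N - θ * tS a b c p θ N := by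
  have key := shift_g p θ (fun k => (k : ℝ) * fc a b c k) N
  calc ((N : ℝ) + 1) * sS a b c p θ (N + 1) - tS a b c p θ (N + 1)
      = ∑ k ∈ Finset.range (N + 2),
          ((N : ℝ) + 1 - (k : ℝ)) * ((k : ℝ) * fc a b c k) * gc p θ (N + 1 - k) := by
        rw [sS, tS, Finset.mul_sum, ← Finset.sum_sub_distrib]
        exact Finset.sum_congr rfl (fun k _ => by ring)
    _ = ∑ k ∈ Finset.range (N + 1),
          ((N : ℝ) + 1 - (k : ℝ)) * ((k : ℝ) * fc a b c k) * gc p θ (N + 1 - k) := by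
        rw [Finset.sum_range_succ]
        have : ((N : ℝ) + 1 - ((N + 1 : ℕ) : ℝ)) = 0 := by push_cast; ring
        rw [this]
        ring
    _ = ∑ k ∈ Finset.range (N + 1),
          θ * ((N : ℝ) - (k : ℝ) - p) * ((k : ℝ) * fc a b c k) * gc p θ (N - k) := key
    _ = θ * ((N : ℝ) - p) * sS a b c p θ N - θ * tS a b c p θ N := by
        rw [sS, tS, Finset.mul_sum, Finset.mul_sum, ← Finset.sum_sub_distrib]
        exact Finset.sum_congr rfl (fun k _ => by ring)

lemma e3 (a b : ℝ) {c : ℝ} (p θ : ℝ) (hc : ∀ n : ℕ, c ≠ -(n : ℝ)) (N : ℕ) :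
    tS a b c p θ (N + 1) + (c - 1) * sS a b c p θ (N + 1)
      = tS a b c p θ N + (a + b) * sS a b c p θ N + a * b * uS a b c p θ N := by
  have key := shift_f a b p θ hc (fun _ => (1 : ℝ)) N
  calc tS a b c p θ (N + 1) + (c - 1) * sS a b c p θ (N + 1)
      = ∑ k ∈ Finset.range (N + 2),
          (1 : ℝ) * ((k : ℝ) * ((k : ℝ) - 1 + c)) * fc a b c k * gc p θ (N + 1 - k) := by
        rw [tS, sS, Finset.mul_sum, ← Finset.sum_add_distrib]
        exact Finset.sum_congr rfl (fun k _ => by ring)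
    _ = ∑ k ∈ Finset.range (N + 1),
          (1 : ℝ) * (((k : ℝ) + a) * ((k : ℝ) + b)) * fc a b c k * gc p θ (N - k) := key
    _ = tS a b c p θ N + (a + b) * sS a b c p θ N + a * b * uS a b c p θ N := by
        rw [tS, sS, uS, Finset.mul_sum, Finset.mul_sum, ← Finset.sum_add_distrib,
          ← Finset.sum_add_distrib]
        exact Finset.sum_congr rfl (fun k _ => by ring)

theorem u_recurrence_three_term (a b c p θ : ℝ) (hc : ∀ n : ℕ, c ≠ -(n : ℝ))
    (hθ : θ ∈ Set.Icc (-1 : ℝ) 1)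
    (u : ℕ → ℝ)
    (hu : ∀ n, u n = ∑ k ∈ Finset.range (n + 1),
      poch a k * poch b k / (k.factorial * poch c k) *
        (θ ^ (n - k) * poch (-p) (n - k) / (n - k).factorial)) :
    ∀ n : ℕ, 2 ≤ n →
      ((n : ℝ) + 1) * ((n : ℝ) + c) * u (n + 1) =
        (((n : ℝ) + a) * ((n : ℝ) + b)
            + θ * (2 * (n : ℝ) ^ 2 - 2 * (n : ℝ) * (p - c + 1) - c * p)) * u n
        - θ * (2 * (n : ℝ) ^ 2 + 2 * (a + b - p - 2) * (n : ℝ) - (a + b - 1) * p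
            + 2 * (a - 1) * (b - 1)
            + θ * ((n : ℝ) - p - 1) * ((n : ℝ) - p + c - 2)) * u (n - 1)
        + θ ^ 2 * (((n : ℝ) + a - p - 2) * ((n : ℝ) + b - p - 2)) * u (n - 2) := by
  intro n hn
  obtain ⟨m, rfl⟩ : ∃ m, n = m + 2 := ⟨n - 2, by omega⟩
  have hu' : ∀ N, u N = uS a b c p θ N := by
    intro N
    rw [hu N]
    rfl
  simp only [hu']
  have hid1 : m + 2 - 1 = m + 1 := rfl
  have hid2 : m + 2 - 2 = m := rfl
  rw [hid1, hid2]
  have F1 := e1 a b c p θ (m + 2)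
  have F2 := e2 a b c p θ (m + 2)
  have F3 := e3 a b p θ hc (m + 2)
  have G1 := e1 a b c p θ (m + 1)
  have G2 := e2 a b c p θ (m + 1)
  have G3 := e3 a b p θ hc (m + 1)
  have H1 := e1 a b c p θ m
  have H2 := e2 a b c p θ m
  have H3 := e3 a b p θ hc m
  have hidx : m + 1 + 1 = m + 2 := rfl
  rw [hidx] at G1 G2 G3
  push_cast at F1 F2 F3 G1 G2 G3 H1 H2 H3 ⊢
  linear_combination (((m : ℝ) + 2) + c) * F1 + F2 + F3
    - (((m : ℝ) + 2) + a + b + θ * (((m : ℝ) + 2) + c - p - 2)) * G1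
    - (1 + θ) * G2 - 2 * θ * G3
    + θ * (((m : ℝ) + 2) + a + b - p - 2) * H1 + θ * H2 + θ ^ 2 * H3
end

section
/- Let a,b ∈ ℝ, c not a nonpositive integer, and define v_n by ln(1-x)·F(a,b;c;x) = Σ_{n≥0} v_n x^n for |x| < 1. Then v_0 = 0, v_1 = -1, and for n ≥ 1 (with n+a-1, n+b-1 ≠ 0), v_{n+1} = 2α_n v_n - β_n v_{n-1} + γ_n w_n, where w_n = (a)_n(b)_n/(n!(c)_n), α_n = (2n² + (a+b+c-1)n + ab)/(2(n+1)(n+c)), β_n = (n+a-1)(n+b-1)/((n+1)(n+c)), and γ_n = [(c-a-b)n² + (a+b-2ab)n - c(a-1)(b-1)]/((n+1)(n+a-1)(n+b-1)(n+c)). -/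
open Polynomial

set_option maxHeartbeats 1000000 in
set_option maxRecDepth 4000 in
theorem v_recurrence (a b c : ℝ) (hc : ∀ n : ℕ, c ≠ -(n : ℝ))
    (w v : ℕ → ℝ)
    (hw : ∀ n, w n = poch a n * poch b n / (n.factorial * poch c n))
    (hv : ∀ n, v n = -∑ k ∈ Finset.range n, w k / ((n : ℝ) - (k : ℝ))) :
    v 0 = 0 ∧ v 1 = -1 ∧
      ∀ n : ℕ, 1 ≤ n → (n : ℝ) + a - 1 ≠ 0 → (n : ℝ) + b - 1 ≠ 0 →
        v (n + 1) =
          2 * ((2 * (n : ℝ) ^ 2 + (a + b + c - 1) * (n : ℝ) + a * b)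
              / (2 * ((n : ℝ) + 1) * ((n : ℝ) + c))) * v n
          - (((n : ℝ) + a - 1) * ((n : ℝ) + b - 1)
              / (((n : ℝ) + 1) * ((n : ℝ) + c))) * v (n - 1)
          + (((c - a - b) * (n : ℝ) ^ 2 + (a + b - 2 * a * b) * (n : ℝ)
                - c * (a - 1) * (b - 1))
              / (((n : ℝ) + 1) * ((n : ℝ) + a - 1) * ((n : ℝ) + b - 1) * ((n : ℝ) + c)))
            * w n := by
  have hpc : ∀ k, poch c k ≠ 0 := by
    intro k
    induction k with
    | zero => simp [poch]
    | succ k ih =>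
      rw [show poch c (k+1) = poch c k * (c + k) by simp [poch, ascPochhammer_succ_eval]]
      exact mul_ne_zero ih (fun h => hc k (by linarith [eq_neg_of_add_eq_zero_left h]))
  have hkc : ∀ k : ℕ, (k : ℝ) + c ≠ 0 := by
    intro k h
    exact hc k (by linarith)
  have hw0 : w 0 = 1 := by simp [hw 0, poch]
  have hwrec : ∀ k : ℕ, ((k:ℝ)+1)*((k:ℝ)+c) * w (k+1) = ((k:ℝ)+a)*((k:ℝ)+b) * w k := by
    intro k
    have hck : (k:ℝ) + c ≠ 0 := hkc k
    have hf : ((k.factorial : ℝ)) ≠ 0 := Nat.cast_ne_zero.2 k.factorial_ne_zero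
    rw [hw, hw, mul_div_assoc', mul_div_assoc',
      div_eq_div_iff (mul_ne_zero (Nat.cast_ne_zero.2 (k+1).factorial_ne_zero) (hpc (k+1)))
        (mul_ne_zero hf (hpc k)),
      show poch a (k+1) = poch a k * (a + k) by simp [poch, ascPochhammer_succ_eval],
      show poch b (k+1) = poch b k * (b + k) by simp [poch, ascPochhammer_succ_eval],
      show poch c (k+1) = poch c k * (c + k) by simp [poch, ascPochhammer_succ_eval],
      Nat.factorial_succ]
    push_cast
    ring
  refine ⟨by simp [hv 0], by rw [hv 1]; simp [hw0], ?_⟩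
  rintro (_|m) hn ha hb
  · omega
  push_cast at ha hb
  have ha' : (m:ℝ) + a ≠ 0 := fun h => ha (by linarith)
  have hb' : (m:ℝ) + b ≠ 0 := fun h => hb (by linarith)
  have hmc : (m:ℝ) + 1 + c ≠ 0 := fun h => hc (m+1) (by push_cast; linarith)
  simp only [hv, Nat.add_sub_cancel, Finset.sum_range_succ]
  push_cast
  rw [show ((m:ℝ) + 1 + a - 1) = (m:ℝ) + a from by ring,
      show ((m:ℝ) + 1 + b - 1) = (m:ℝ) + b from by ring]
  set D : ℕ → ℝ := fun k =>
    (k:ℝ) * ((k:ℝ) + c - 1) / (((m:ℝ) + 1 - (k:ℝ)) * ((m:ℝ) + 2 - (k:ℝ))) * w k with hD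
  have comb : ((m:ℝ)+1+1) * ((m:ℝ)+1+c) * (∑ x ∈ Finset.range m, w x / ((m:ℝ) + 1 + 1 - (x:ℝ)))
      - (2*((m:ℝ)+1)^2 + (a+b+c-1)*((m:ℝ)+1) + a*b) * (∑ x ∈ Finset.range m, w x / ((m:ℝ) + 1 - (x:ℝ)))
      + (((m:ℝ)+a)*((m:ℝ)+b)) * (∑ k ∈ Finset.range m, w k / ((m:ℝ) - (k:ℝ)))
      = (m:ℝ) * ((m:ℝ) + c - 1) / 2 * w m := by
    calc ((m:ℝ)+1+1) * ((m:ℝ)+1+c) * (∑ x ∈ Finset.range m, w x / ((m:ℝ) + 1 + 1 - (x:ℝ)))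
      - (2*((m:ℝ)+1)^2 + (a+b+c-1)*((m:ℝ)+1) + a*b) * (∑ x ∈ Finset.range m, w x / ((m:ℝ) + 1 - (x:ℝ)))
      + (((m:ℝ)+a)*((m:ℝ)+b)) * (∑ k ∈ Finset.range m, w k / ((m:ℝ) - (k:ℝ)))
        = ∑ k ∈ Finset.range m, (D (k+1) - D k) := by
          rw [Finset.mul_sum, Finset.mul_sum, Finset.mul_sum, ← Finset.sum_sub_distrib,
            ← Finset.sum_add_distrib]
          refine Finset.sum_congr rfl fun k hk => ?_
          have hkm : (k:ℝ) < (m:ℝ) := by exact_mod_cast Finset.mem_range.1 hk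
          have h1 : (m:ℝ) - k ≠ 0 := by intro h; linarith
          have h2 : (m:ℝ) + 1 - k ≠ 0 := by intro h; linarith
          have h3 : (m:ℝ) + 2 - k ≠ 0 := by intro h; linarith
          have h3' : (m:ℝ) + 1 + 1 - k ≠ 0 := by intro h; linarith
          have hk1 : (k:ℝ) + 1 ≠ 0 := by positivity
          have hck : (k:ℝ) + c ≠ 0 := hkc k
          have hwk : w (k+1) = ((k:ℝ)+a) * ((k:ℝ)+b) / (((k:ℝ)+1) * ((k:ℝ)+c)) * w k := by
            rw [div_mul_eq_mul_div, eq_div_iff (mul_ne_zero hk1 hck)]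
            linear_combination hwrec k
          simp only [hD]
          push_cast
          rw [hwk,
            show ((m:ℝ) + 1 - ((k:ℝ) + 1)) = (m:ℝ) - k from by ring,
            show ((m:ℝ) + 2 - ((k:ℝ) + 1)) = (m:ℝ) + 1 - k from by ring]
          field_simp
          ring
      _ = D m - D 0 := Finset.sum_range_sub D m
      _ = (m:ℝ) * ((m:ℝ) + c - 1) / 2 * w m := by
          simp only [hD, Nat.cast_zero]
          rw [show ((m:ℝ) + 1 - (m:ℝ)) * ((m:ℝ) + 2 - (m:ℝ)) = 2 from by ring]
          ring
  have hwm : w m = ((m:ℝ)+1) * ((m:ℝ)+c) / (((m:ℝ)+a) * ((m:ℝ)+b)) * w (m+1) := by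
    rw [div_mul_eq_mul_div, eq_div_iff (mul_ne_zero ha' hb')]
    push_cast at hwrec ⊢
    linear_combination -hwrec m
  rw [hwm] at comb ⊢
  rw [show ((m:ℝ) + 1 + 1 - (m:ℝ)) = 2 from by ring,
      show ((m:ℝ) + 1 - (m:ℝ)) = 1 from by ring,
      show ((m:ℝ) + 1 + 1 - ((m:ℝ) + 1)) = 1 from by ring,
      show ((m:ℝ) + 1 + 1) * ((m:ℝ) + a) * ((m:ℝ) + b) * ((m:ℝ) + 1 + c)
        = ((m:ℝ) + 1 + 1) * (((m:ℝ) + a) * (((m:ℝ) + b) * ((m:ℝ) + 1 + c))) from by ring]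
  have h21 : ((m:ℝ) + 1 + 1) ≠ 0 := by positivity
  set s1 := ∑ x ∈ Finset.range m, w x / ((m:ℝ) + 1 + 1 - (x:ℝ)) with hs1
  set s2 := ∑ x ∈ Finset.range m, w x / ((m:ℝ) + 1 - (x:ℝ)) with hs2
  set s3 := ∑ k ∈ Finset.range m, w k / ((m:ℝ) - (k:ℝ)) with hs3
  clear_value s1 s2 s3
  have comb' : 2 * (((m:ℝ)+a)*((m:ℝ)+b)) *
      (((m:ℝ) + 1 + 1) * ((m:ℝ) + 1 + c) * s1
        - (2 * ((m:ℝ) + 1) ^ 2 + (a + b + c - 1) * ((m:ℝ) + 1) + a * b) * s2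
        + ((m:ℝ) + a) * ((m:ℝ) + b) * s3)
      = (m:ℝ) * ((m:ℝ) + c - 1) * (((m:ℝ) + 1) * ((m:ℝ) + c)) * w (m+1) := by
    rw [comb]
    clear comb hwm hs1 hs2 hs3 hD hv hw hw0 hwrec hpc hc hkc hn ha hb
    field_simp
  clear comb hwm hs1 hs2 hs3 hD hv hw hw0 hwrec hpc hc hkc hn ha hb
  rw [div_one, div_one]
  field_simp
  linear_combination (-1 : ℝ) * comb'
end

section
/- Let 0 < a and a + b < 1 with b > 0 (so 0 < a < a+b < 1). If a+b > 1/2, then Γ(a+b)/Γ(a+2b) < Γ(1-a-b)/Γ(1-a); if a+b < 1/2, the reverse inequality holds. -/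
open MeasureTheory intervalIntegral Set

/-- The real Beta function formula. -/
lemma real_gamma_mul_gamma_eq_beta {u v : ℝ} (hu : 0 < u) (hv : 0 < v) :
    Real.Gamma u * Real.Gamma v
      = Real.Gamma (u + v) * ∫ t in (0:ℝ)..1, t ^ (u - 1) * (1 - t) ^ (v - 1) := by
  have h := Complex.Gamma_mul_Gamma_eq_betaIntegral (s := (u : ℂ)) (t := (v : ℂ))
    (by simpa using hu) (by simpa using hv)
  have hbeta : Complex.betaIntegral (u : ℂ) (v : ℂ)
      = ((∫ t in (0:ℝ)..1, t ^ (u - 1) * (1 - t) ^ (v - 1) : ℝ) : ℂ) := by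
    rw [Complex.betaIntegral, ← intervalIntegral.integral_ofReal]
    refine intervalIntegral.integral_congr fun t ht => ?_
    rw [uIcc_of_le zero_le_one] at ht
    push_cast
    rw [Complex.ofReal_cpow ht.1, Complex.ofReal_cpow (by linarith [ht.2] : (0:ℝ) ≤ 1 - t)]
    push_cast
    ring
  rw [hbeta] at h
  have h2 : ((u : ℂ) + v) = ((u + v : ℝ) : ℂ) := by push_cast; ring
  rw [h2, Complex.Gamma_ofReal, Complex.Gamma_ofReal, Complex.Gamma_ofReal] at h
  exact_mod_cast h

lemma beta_intervalIntegrable {u v : ℝ} (hu : 0 < u) (hv : 0 < v) :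
    IntervalIntegrable (fun t : ℝ => t ^ (u - 1) * (1 - t) ^ (v - 1)) volume 0 1 := by
  have hc := Complex.betaIntegral_convergent (u := (u : ℂ)) (v := (v : ℂ))
    (by simpa using hu) (by simpa using hv)
  rw [intervalIntegrable_iff_integrableOn_Ioc_of_le zero_le_one] at hc ⊢
  have hre : IntegrableOn
      (fun t : ℝ => ((t : ℂ) ^ ((u : ℂ) - 1) * (1 - (t : ℂ)) ^ ((v : ℂ) - 1)).re)
      (Ioc 0 1) volume := hc.re
  refine hre.congr_fun (fun t ht => ?_) measurableSet_Ioc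
  dsimp only
  rw [show ((t : ℂ)) ^ ((u : ℂ) - 1) = ((t ^ (u - 1) : ℝ) : ℂ) by
        rw [Complex.ofReal_cpow ht.1.le]; norm_cast,
      show ((1 : ℂ) - (t : ℂ)) ^ ((v : ℂ) - 1) = (((1 - t) ^ (v - 1) : ℝ) : ℂ) by
        rw [Complex.ofReal_cpow (by linarith [ht.2] : (0:ℝ) ≤ 1 - t)]; norm_cast]
  rw [← Complex.ofReal_mul, Complex.ofReal_re]

/-- Key lemma: `x ↦ Γ(x)/Γ(x+b)` is strictly decreasing. -/
lemma gamma_key {x y b : ℝ} (hx : 0 < x) (hxy : x < y) (hb : 0 < b) :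
    Real.Gamma y * Real.Gamma (x + b) < Real.Gamma x * Real.Gamma (y + b) := by
  have hy : 0 < y := hx.trans hxy
  have hxb : 0 < x + b := by linarith
  have hyb : 0 < y + b := by linarith
  have hB : (∫ t in (0:ℝ)..1, t ^ (y - 1) * (1 - t) ^ (b - 1))
      < ∫ t in (0:ℝ)..1, t ^ (x - 1) * (1 - t) ^ (b - 1) := by
    have hfi := beta_intervalIntegrable hy hb
    have hgi := beta_intervalIntegrable hx hb
    refine intervalIntegral.integral_lt_integral_of_ae_le_of_measure_setOf_lt_ne_zero
      zero_le_one hfi hgi ?_ ?_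
    · refine (ae_restrict_iff' measurableSet_Ioc).2 (Filter.Eventually.of_forall fun t ht => ?_)
      have h2 : t ^ (y - 1) ≤ t ^ (x - 1) :=
        Real.rpow_le_rpow_of_exponent_ge ht.1 ht.2 (by linarith)
      exact mul_le_mul_of_nonneg_right h2 (Real.rpow_nonneg (by linarith [ht.2]) _)
    · intro h0
      have hsub : Ioo (0:ℝ) 1 ⊆ {t : ℝ | t ^ (y - 1) * (1 - t) ^ (b - 1)
          < t ^ (x - 1) * (1 - t) ^ (b - 1)} ∩ Ioc 0 1 := by
        intro t ht
        constructor
        · have h2 : t ^ (y - 1) < t ^ (x - 1) :=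
            Real.rpow_lt_rpow_of_exponent_gt ht.1 ht.2 (by linarith)
          exact mul_lt_mul_of_pos_right h2 (Real.rpow_pos_of_pos (by linarith [ht.2]) _)
        · exact ⟨ht.1, ht.2.le⟩
      rw [Measure.restrict_apply' measurableSet_Ioc] at h0
      have := measure_mono_null hsub h0
      simp [Real.volume_Ioo] at this
  have hb1 := real_gamma_mul_gamma_eq_beta hx hb
  have hb2 := real_gamma_mul_gamma_eq_beta hy hb
  have hGb : 0 < Real.Gamma b := Real.Gamma_pos_of_pos hb
  have hGxb : 0 < Real.Gamma (x + b) := Real.Gamma_pos_of_pos hxb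
  have hGyb : 0 < Real.Gamma (y + b) := Real.Gamma_pos_of_pos hyb
  have key : Real.Gamma y * Real.Gamma (x + b) * Real.Gamma b
      < Real.Gamma x * Real.Gamma (y + b) * Real.Gamma b := by
    calc Real.Gamma y * Real.Gamma (x + b) * Real.Gamma b
        = Real.Gamma (x + b) * (Real.Gamma y * Real.Gamma b) := by ring
      _ = Real.Gamma (x + b) * (Real.Gamma (y + b)
            * ∫ t in (0:ℝ)..1, t ^ (y - 1) * (1 - t) ^ (b - 1)) := by rw [hb2]
      _ < Real.Gamma (x + b) * (Real.Gamma (y + b)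
            * ∫ t in (0:ℝ)..1, t ^ (x - 1) * (1 - t) ^ (b - 1)) := by
          apply mul_lt_mul_of_pos_left _ hGxb
          exact mul_lt_mul_of_pos_left hB hGyb
      _ = Real.Gamma (y + b) * (Real.Gamma x * Real.Gamma b) := by rw [hb1]; ring
      _ = Real.Gamma x * Real.Gamma (y + b) * Real.Gamma b := by ring
  exact lt_of_mul_lt_mul_right key hGb.le

theorem gamma_ratio_inequality (a b : ℝ) (ha : 0 < a) (hb : 0 < b) (hab : a + b < 1) :
    (a + b > 1/2 →
      Real.Gamma (a + b) / Real.Gamma (a + 2 * b)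
        < Real.Gamma (1 - a - b) / Real.Gamma (1 - a)) ∧
    (a + b < 1/2 →
      Real.Gamma (a + b) / Real.Gamma (a + 2 * b)
        > Real.Gamma (1 - a - b) / Real.Gamma (1 - a)) := by
  have hG2 : 0 < Real.Gamma (a + 2 * b) := Real.Gamma_pos_of_pos (by linarith)
  have hG4 : 0 < Real.Gamma (1 - a) := Real.Gamma_pos_of_pos (by linarith)
  constructor
  · intro h
    rw [div_lt_div_iff₀ hG2 hG4]
    have := gamma_key (x := 1 - a - b) (y := a + b) (b := b) (by linarith) (by linarith) hb
    have e1 : 1 - a - b + b = 1 - a := by ring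
    have e2 : a + b + b = a + 2 * b := by ring
    rw [e1, e2] at this
    linarith
  · intro h
    rw [gt_iff_lt, div_lt_div_iff₀ hG4 hG2]
    have := gamma_key (x := a + b) (y := 1 - a - b) (b := b) (by linarith) (by linarith) hb
    have e1 : 1 - a - b + b = 1 - a := by ring
    have e2 : a + b + b = a + 2 * b := by ring
    rw [e1, e2] at this
    linarith
end

section
/- Let a ∈ (0,1), b > 0, p₀ = a/(2b+1). If a - b > 1/2, then F(a,b;2b+1;t) < (1-t)^{p₀} F(a,b+1;2b+1;t) for all t ∈ (0,1); if a - b < 1/2, the reverse strict inequality holds; if a - b = 1/2 equality holds for all t ∈ (0,1). -/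
set_option linter.unreachableTactic false
set_option linter.unusedTactic false
set_option linter.unusedSectionVars false

open Polynomial Filter Set

namespace HGaux

lemma poch_zero (a : ℝ) : poch a 0 = 1 := by simp [poch]

lemma poch_succ (a : ℝ) (n : ℕ) : poch a (n+1) = poch a n * (a + n) := by
  simp [poch, ascPochhammer_succ_eval]

lemma poch_succ_left (a : ℝ) (n : ℕ) : poch a (n+1) = a * poch (a+1) n := by
  simp [poch, ascPochhammer_succ_left, eval_mul, eval_comp]

lemma poch_pos {a : ℝ} (ha : 0 < a) (n : ℕ) : 0 < poch a n :=
  ascPochhammer_pos n a ha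

/-- ratio of shifted linear terms tends to 1 -/
lemma tendsto_linratio (α β : ℝ) (hβ : ∀ n : ℕ, β + n ≠ 0) :
    Tendsto (fun n : ℕ => (α + n) / (β + n)) atTop (nhds 1) := by
  have h1 : (fun n : ℕ => (α + n) / (β + n)) =ᶠ[atTop]
      (fun n : ℕ => 1 + (α - β) / (β + n)) := by
    filter_upwards [eventually_ge_atTop 0] with n _
    have hβn := hβ n
    field_simp
    ring
  rw [tendsto_congr' h1]
  have h2 : Tendsto (fun n : ℕ => (β + (n:ℝ))) atTop atTop :=
    tendsto_atTop_add_const_left _ β tendsto_natCast_atTop_atTop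
  have h3 : Tendsto (fun n : ℕ => (α - β) / (β + n)) atTop (nhds 0) :=
    Tendsto.div_atTop tendsto_const_nhds h2
  simpa using (tendsto_const_nhds (x := (1:ℝ))).add h3

section Series

variable {f : ℕ → ℝ}

lemma summable_pow (hpos : ∀ n, 0 < f n)
    (hrat : Tendsto (fun n => f (n+1) / f n) atTop (nhds 1))
    {x : ℝ} (hx : |x| < 1) : Summable (fun n => f n * x ^ n) := by
  set r' : ℝ := (|x| + 1) / 2 with hr'
  have hxr : |x| < r' := by rw [hr']; linarith
  have hr1 : r' < 1 := by rw [hr']; linarith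
  apply summable_of_ratio_norm_eventually_le hr1
  have htend : Tendsto (fun n => (f (n+1) / f n) * |x|) atTop (nhds |x|) := by
    simpa using hrat.mul_const |x|
  have hev : ∀ᶠ n in atTop, (f (n+1) / f n) * |x| ≤ r' :=
    htend.eventually_le_const hxr
  filter_upwards [hev] with n hn
  have h1 : ‖f (n+1) * x ^ (n+1)‖ = (f (n+1) / f n * |x|) * ‖f n * x ^ n‖ := by
    rw [norm_mul, norm_mul, norm_pow, norm_pow]
    rw [Real.norm_eq_abs, Real.norm_eq_abs, Real.norm_eq_abs,
      abs_of_pos (hpos (n+1)), abs_of_pos (hpos n)]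
    field_simp [(hpos n).ne']
    ring
  rw [h1]
  have h2 : (0:ℝ) ≤ ‖f n * x ^ n‖ := norm_nonneg _
  exact mul_le_mul_of_nonneg_right hn h2

lemma deriv_seq_pos (hpos : ∀ n, 0 < f n) :
    ∀ n : ℕ, 0 < ((n:ℝ)+1) * f (n+1) := by
  intro n
  have : (0:ℝ) < (n:ℝ)+1 := by positivity
  exact mul_pos this (hpos _)

lemma deriv_seq_tendsto (hpos : ∀ n, 0 < f n)
    (hrat : Tendsto (fun n => f (n+1) / f n) atTop (nhds 1)) :
    Tendsto (fun n : ℕ => (((((n+1:ℕ)):ℝ)+1) * f (n+1+1)) / (((n:ℝ)+1) * f (n+1)))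
      atTop (nhds 1) := by
  have h1 : Tendsto (fun n : ℕ => ((n:ℝ)+1+1) / ((n:ℝ)+1)) atTop (nhds 1) := by
    have := tendsto_linratio 2 1 (fun n => by positivity)
    apply this.congr
    intro n; ring_nf
  have h2 : Tendsto (fun n : ℕ => f (n+1+1) / f (n+1)) atTop (nhds 1) :=
    hrat.comp (tendsto_add_atTop_nat 1)
  have := h1.mul h2
  rw [one_mul] at this
  apply this.congr
  intro n
  have hf : f (n+1) ≠ 0 := (hpos _).ne'
  have hn : ((n:ℝ)+1) ≠ 0 := by positivity
  push_cast
  field_simp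

/-- Summability of the derivative-type series `n * f n * x^(n-1)` style bounds. -/
lemma summable_deriv_aux (hpos : ∀ n, 0 < f n)
    (hrat : Tendsto (fun n => f (n+1) / f n) atTop (nhds 1))
    {ρ : ℝ} (hρ0 : 0 < ρ) (hρ1 : ρ < 1) :
    Summable (fun n : ℕ => f n * ((n : ℝ) * ρ ^ (n - 1))) := by
  set r' : ℝ := (ρ + 1) / 2 with hr'
  have hρr : ρ < r' := by rw [hr']; linarith
  have hr1 : r' < 1 := by rw [hr']; linarith
  apply summable_of_ratio_norm_eventually_le hr1
  have h2 : Tendsto (fun n : ℕ => ((n:ℝ)+1) / n) atTop (nhds 1) := by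
    have h4 : Tendsto (fun n : ℕ => 1 + 1/(n:ℝ)) atTop (nhds 1) := by
      have : Tendsto (fun n : ℕ => 1 / (n:ℝ)) atTop (nhds 0) := tendsto_one_div_atTop_nhds_zero_nat
      simpa using (tendsto_const_nhds (x := (1:ℝ))).add this
    apply Tendsto.congr' _ h4
    filter_upwards [eventually_ge_atTop 1] with n hn
    have hn0 : ((n:ℝ)) ≠ 0 := by
      have : (1:ℝ) ≤ n := by exact_mod_cast hn
      linarith
    field_simp
  have htend : Tendsto
      (fun n : ℕ => (f (n+1) / f n) * (((n:ℝ)+1) / n) * ρ) atTop (nhds ρ) := by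
    have := (hrat.mul h2).mul_const ρ
    simpa using this
  have hev : ∀ᶠ n in atTop, (f (n+1) / f n) * (((n:ℝ)+1) / n) * ρ ≤ r' :=
    htend.eventually_le_const hρr
  filter_upwards [hev, eventually_ge_atTop 1] with n hn hn1
  have hnR : (1:ℝ) ≤ (n:ℝ) := by exact_mod_cast hn1
  have hn0 : (0:ℝ) < n := by linarith
  have hf := hpos n
  have hf1 := hpos (n+1)
  have hL : (0:ℝ) < f (n+1) * ((((n+1:ℕ)):ℝ) * ρ ^ ((n+1) - 1)) := by positivity
  have hR : (0:ℝ) < f n * ((n:ℝ) * ρ ^ (n - 1)) := by positivity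
  rw [Real.norm_eq_abs, Real.norm_eq_abs, abs_of_pos hL, abs_of_pos hR]
  have h1 : (n+1) - 1 = n := by omega
  have h2' : n - 1 + 1 = n := by omega
  have h3 : ρ ^ n = ρ * ρ ^ (n - 1) := by conv_lhs => rw [← h2']; rw [pow_succ, mul_comm]
  have hEq : f (n+1) * ((((n+1:ℕ)):ℝ) * ρ ^ ((n+1) - 1))
      = ((f (n+1) / f n) * (((n:ℝ)+1) / n) * ρ) * (f n * ((n:ℝ) * ρ ^ (n - 1))) := by
    rw [h1, h3]
    push_cast
    field_simp
  rw [hEq]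
  exact mul_le_mul_of_nonneg_right hn hR.le

/-- Term-by-term differentiation of a power series with radius ≥ 1. -/
lemma hasDerivAt_tsum_pow (hpos : ∀ n, 0 < f n)
    (hrat : Tendsto (fun n => f (n+1) / f n) atTop (nhds 1))
    {t : ℝ} (ht : |t| < 1) :
    HasDerivAt (fun x => ∑' n, f n * x ^ n)
      (∑' n : ℕ, ((n:ℝ)+1) * f (n+1) * t ^ n) t := by
  set ρ : ℝ := (|t| + 1) / 2 with hρ
  have habs : (0:ℝ) ≤ |t| := abs_nonneg t
  have hρ0 : 0 < ρ := by rw [hρ]; linarith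
  have hρ1 : ρ < 1 := by rw [hρ]; linarith
  have htρ : |t| < ρ := by rw [hρ]; linarith
  have hu : Summable (fun n : ℕ => f n * ((n : ℝ) * ρ ^ (n - 1))) :=
    summable_deriv_aux hpos hrat hρ0 hρ1
  have hbound : ∀ (y : ℝ), |y| ≤ ρ → ∀ n : ℕ,
      ‖f n * ((n:ℝ) * y ^ (n - 1))‖ ≤ f n * ((n : ℝ) * ρ ^ (n - 1)) := by
    intro y hy n
    have h1 : ‖f n * ((n:ℝ) * y ^ (n - 1))‖ = f n * ((n:ℝ) * |y| ^ (n-1)) := by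
      rw [Real.norm_eq_abs, abs_mul, abs_mul, abs_pow, abs_of_pos (hpos n),
        abs_of_nonneg (n.cast_nonneg : (0:ℝ) ≤ n)]
    rw [h1]
    have h2 : |y| ^ (n-1) ≤ ρ ^ (n-1) := pow_le_pow_left₀ (abs_nonneg y) hy _
    have := mul_le_mul_of_nonneg_left h2 (n.cast_nonneg : (0:ℝ) ≤ n)
    exact mul_le_mul_of_nonneg_left this (hpos n).le
  have hmain : HasDerivAt (fun x => ∑' n, f n * x ^ n)
      (∑' n, f n * ((n:ℝ) * t ^ (n - 1))) t := by
    apply hasDerivAt_tsum_of_isPreconnected hu (Metric.isOpen_ball)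
      (convex_ball (0:ℝ) ρ).isPreconnected
      (g := fun n y => f n * y ^ n) (g' := fun n y => f n * ((n:ℝ) * y ^ (n - 1)))
      (y₀ := t)
    · intro n y _
      exact (hasDerivAt_pow n y).const_mul (f n)
    · intro n y hy
      rw [Metric.mem_ball, Real.dist_eq, sub_zero] at hy
      exact hbound y hy.le n
    · rw [Metric.mem_ball, Real.dist_eq, sub_zero]; exact htρ
    · exact summable_pow hpos hrat ht
    · rw [Metric.mem_ball, Real.dist_eq, sub_zero]; exact htρ
  have hsum : Summable (fun n : ℕ => f n * ((n:ℝ) * t ^ (n - 1))) :=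
    Summable.of_norm_bounded hu (hbound t htρ.le)
  have hre : ∑' n, f n * ((n:ℝ) * t ^ (n - 1)) = ∑' n : ℕ, ((n:ℝ)+1) * f (n+1) * t ^ n := by
    rw [Summable.tsum_eq_zero_add hsum]
    simp only [Nat.cast_zero, zero_mul, mul_zero, zero_add]
    apply tsum_congr
    intro n
    push_cast
    ring
  rwa [hre] at hmain

end Series

section HG

variable (a b : ℝ)

noncomputable def fc (n : ℕ) : ℝ := poch a n * poch b n / (poch (2*b+1) n * n.factorial)

noncomputable def gcv (n : ℕ) : ℝ := fc a b n * (b + n) / b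

noncomputable def uu (t : ℝ) : ℝ := ∑' n : ℕ, fc a b n * t ^ n
noncomputable def vv (t : ℝ) : ℝ := ∑' n : ℕ, gcv a b n * t ^ n
noncomputable def du (t : ℝ) : ℝ := ∑' n : ℕ, ((n:ℝ)+1) * fc a b (n+1) * t ^ n
noncomputable def dv (t : ℝ) : ℝ := ∑' n : ℕ, ((n:ℝ)+1) * gcv a b (n+1) * t ^ n

variable {a b}
variable (ha : 0 < a) (hb : 0 < b)

include ha hb

lemma c_pos : (0:ℝ) < 2*b+1 := by linarith

lemma fc_pos (n : ℕ) : 0 < fc a b n := by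
  have h1 := poch_pos ha n
  have h2 := poch_pos hb n
  have h3 := poch_pos (c_pos ha hb) n
  have h4 : (0:ℝ) < n.factorial := by exact_mod_cast n.factorial_pos
  exact div_pos (mul_pos h1 h2) (mul_pos h3 h4)

lemma gcv_pos (n : ℕ) : 0 < gcv a b n := by
  have h1 := fc_pos ha hb n
  have h2 : (0:ℝ) < b + n := by positivity
  exact div_pos (mul_pos h1 h2) hb

lemma fc_zero : fc a b 0 = 1 := by
  simp [fc, poch_zero]

lemma gcv_zero : gcv a b 0 = 1 := by
  simp only [gcv, fc_zero ha hb, Nat.cast_zero, add_zero, one_mul]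
  field_simp

lemma fc_succ (n : ℕ) :
    fc a b (n+1) * ((2*b+1+n) * (n+1)) = fc a b n * ((a+n)*(b+n)) := by
  have h3 := (poch_pos (c_pos ha hb) n).ne'
  have h4 : ((n.factorial : ℝ)) ≠ 0 := by
    have : (0:ℝ) < n.factorial := by exact_mod_cast n.factorial_pos
    exact this.ne'
  have h5 : (2*b+1+(n:ℝ)) ≠ 0 := by positivity
  have h6 : ((n:ℝ)+1) ≠ 0 := by positivity
  rw [fc, fc, poch_succ, poch_succ, poch_succ]
  rw [Nat.factorial_succ]
  push_cast
  field_simp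

lemma fc_ratio_eq (n : ℕ) :
    fc a b (n+1) / fc a b n = ((a+n)/((n:ℝ)+1)) * ((b+n)/(2*b+1+n)) := by
  have h0 := (fc_pos ha hb n).ne'
  have h5 : (2*b+1+(n:ℝ)) ≠ 0 := by positivity
  have h6 : ((n:ℝ)+1) ≠ 0 := by positivity
  have := fc_succ ha hb (a := a) (b := b) n
  field_simp
  nlinarith [this]

lemma fc_tendsto :
    Filter.Tendsto (fun n => fc a b (n+1) / fc a b n) Filter.atTop (nhds 1) := by
  have h1 : Filter.Tendsto (fun n : ℕ => (a+(n:ℝ))/((n:ℝ)+1)) Filter.atTop (nhds 1) := by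
    have := tendsto_linratio a 1 (fun n => by positivity)
    apply this.congr; intro n; rw [add_comm (1:ℝ) (n:ℝ)]
  have h2 : Filter.Tendsto (fun n : ℕ => (b+(n:ℝ))/(2*b+1+(n:ℝ))) Filter.atTop (nhds 1) := by
    have := tendsto_linratio b (2*b+1) (fun n => by positivity)
    exact this
  have := h1.mul h2
  rw [one_mul] at this
  apply this.congr
  intro n
  rw [fc_ratio_eq ha hb]

lemma gcv_ratio_eq (n : ℕ) :
    gcv a b (n+1) / gcv a b n = (fc a b (n+1) / fc a b n) * ((b+((n:ℝ)+1))/(b+n)) := by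
  have h0 := (fc_pos ha hb n).ne'
  have h2 : (b+(n:ℝ)) ≠ 0 := by positivity
  rw [gcv, gcv]
  push_cast
  field_simp

lemma gcv_tendsto :
    Filter.Tendsto (fun n => gcv a b (n+1) / gcv a b n) Filter.atTop (nhds 1) := by
  have h2 : Filter.Tendsto (fun n : ℕ => (b+((n:ℝ)+1))/(b+(n:ℝ))) Filter.atTop (nhds 1) := by
    have := tendsto_linratio (b+1) b (fun n => by positivity)
    apply this.congr; intro n; ring_nf
  have := (fc_tendsto ha hb).mul h2
  rw [one_mul] at this
  apply this.congr
  intro n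
  rw [gcv_ratio_eq ha hb]

lemma summable_fc {t : ℝ} (ht : |t| < 1) : Summable (fun n : ℕ => fc a b n * t ^ n) :=
  summable_pow (fc_pos ha hb) (fc_tendsto ha hb) ht

lemma summable_gcv {t : ℝ} (ht : |t| < 1) : Summable (fun n : ℕ => gcv a b n * t ^ n) :=
  summable_pow (gcv_pos ha hb) (gcv_tendsto ha hb) ht

lemma hasDerivAt_uu {t : ℝ} (ht : |t| < 1) : HasDerivAt (uu a b) (du a b t) t :=
  hasDerivAt_tsum_pow (fc_pos ha hb) (fc_tendsto ha hb) ht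

lemma hasDerivAt_vv {t : ℝ} (ht : |t| < 1) : HasDerivAt (vv a b) (dv a b t) t :=
  hasDerivAt_tsum_pow (gcv_pos ha hb) (gcv_tendsto ha hb) ht

lemma uu_zero : uu a b 0 = 1 := by
  rw [uu, tsum_eq_single 0]
  · simp [fc_zero ha hb]
  · intro n hn
    simp [zero_pow hn]

lemma vv_zero : vv a b 0 = 1 := by
  rw [vv, tsum_eq_single 0]
  · simp [gcv_zero ha hb]
  · intro n hn
    simp [zero_pow hn]

lemma uu_ge_one {t : ℝ} (ht0 : 0 ≤ t) (ht : t < 1) : 1 ≤ uu a b t := by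
  have hs := summable_fc ha hb (t := t) (by rw [abs_of_nonneg ht0]; exact ht)
  have h0 : fc a b 0 * t ^ 0 = 1 := by simp [fc_zero ha hb]
  calc (1:ℝ) = fc a b 0 * t ^ 0 := h0.symm
    _ ≤ ∑' n : ℕ, fc a b n * t ^ n := by
        apply Summable.le_tsum hs
        intro n _
        exact mul_nonneg (fc_pos ha hb n).le (pow_nonneg ht0 n)

lemma vv_ge_one {t : ℝ} (ht0 : 0 ≤ t) (ht : t < 1) : 1 ≤ vv a b t := by
  have hs := summable_gcv ha hb (t := t) (by rw [abs_of_nonneg ht0]; exact ht)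
  have h0 : gcv a b 0 * t ^ 0 = 1 := by simp [gcv_zero ha hb]
  calc (1:ℝ) = gcv a b 0 * t ^ 0 := h0.symm
    _ ≤ ∑' n : ℕ, gcv a b n * t ^ n := by
        apply Summable.le_tsum hs
        intro n _
        exact mul_nonneg (gcv_pos ha hb n).le (pow_nonneg ht0 n)

omit ha hb in
lemma hypF_eq_uu (t : ℝ) : hypF a b (2*b+1) t = uu a b t := by
  apply tsum_congr
  intro n
  rw [fc]
  ring

omit ha hb in
lemma poch_b1 (n : ℕ) : b * poch (b+1) n = poch b n * (b + n) := by
  rw [← poch_succ_left, poch_succ]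

omit ha in
lemma hypF_eq_vv (t : ℝ) : hypF a (b+1) (2*b+1) t = vv a b t := by
  apply tsum_congr
  intro n
  have h1 : poch (b+1) n = poch b n * (b + n) / b := by
    rw [← poch_b1]
    field_simp
  rw [gcv, fc, h1]
  field_simp

omit ha hb in
lemma hasSum_shift {f : ℕ → ℝ} (hpos : ∀ n, 0 < f n)
    (hrat : Filter.Tendsto (fun n => f (n+1) / f n) Filter.atTop (nhds 1))
    {t : ℝ} (ht : |t| < 1) :
    HasSum (fun n : ℕ => (n:ℝ) * f n * t ^ n)
      (t * ∑' n : ℕ, ((n:ℝ)+1) * f (n+1) * t ^ n) := by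
  have hd : HasSum (fun n : ℕ => ((n:ℝ)+1) * f (n+1) * t ^ n)
      (∑' n : ℕ, ((n:ℝ)+1) * f (n+1) * t ^ n) :=
    (summable_pow (f := fun n => ((n:ℝ)+1) * f (n+1))
      (deriv_seq_pos hpos) (deriv_seq_tendsto hpos hrat) ht).hasSum
  have h1 : HasSum (fun n : ℕ => (((n+1:ℕ)):ℝ) * f (n+1) * t ^ (n+1))
      (t * ∑' n : ℕ, ((n:ℝ)+1) * f (n+1) * t ^ n) := by
    have h2 := hd.mul_left t
    have hfe : (fun n : ℕ => (((n+1:ℕ)):ℝ) * f (n+1) * t ^ (n+1))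
        = (fun n : ℕ => t * (((n:ℝ)+1) * f (n+1) * t ^ n)) := by
      funext n; push_cast; ring
    rw [hfe]
    exact h2
  have h3 := (hasSum_nat_add_iff (f := fun n : ℕ => (n:ℝ) * f n * t ^ n) 1).mp h1
  simpa using h3

/-- Relation R1: `t * u' = b * (v - u)`. -/
lemma rel1 {t : ℝ} (ht : |t| < 1) :
    t * du a b t = b * (vv a b t - uu a b t) := by
  have hA : HasSum (fun n : ℕ => (n:ℝ) * fc a b n * t ^ n) (t * du a b t) :=
    hasSum_shift (fc_pos ha hb) (fc_tendsto ha hb) ht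
  have hfc : HasSum (fun n : ℕ => fc a b n * t ^ n) (uu a b t) :=
    (summable_fc ha hb ht).hasSum
  have hgc : HasSum (fun n : ℕ => gcv a b n * t ^ n) (vv a b t) :=
    (summable_gcv ha hb ht).hasSum
  have hB : HasSum (fun n : ℕ => b * (gcv a b n * t ^ n - fc a b n * t ^ n))
      (b * (vv a b t - uu a b t)) := (hgc.sub hfc).mul_left b
  have hfe : (fun n : ℕ => b * (gcv a b n * t ^ n - fc a b n * t ^ n))
      = (fun n : ℕ => (n:ℝ) * fc a b n * t ^ n) := by
    funext n
    rw [gcv]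
    field_simp
    ring
  rw [hfe] at hB
  exact hA.unique hB

/-- Relation R2: `t * v' - t * (t * v') = a*t*v - b*v + b*u`. -/
lemma rel2 {t : ℝ} (ht : |t| < 1) :
    t * dv a b t - t * (t * dv a b t)
      = a * t * vv a b t - b * vv a b t + b * uu a b t := by
  have hfc : HasSum (fun n : ℕ => fc a b n * t ^ n) (uu a b t) :=
    (summable_fc ha hb ht).hasSum
  have hgc : HasSum (fun n : ℕ => gcv a b n * t ^ n) (vv a b t) :=
    (summable_gcv ha hb ht).hasSum
  have hη : HasSum (fun n : ℕ => (n:ℝ) * gcv a b n * t ^ n) (t * dv a b t) :=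
    hasSum_shift (gcv_pos ha hb) (gcv_tendsto ha hb) ht
  -- shifted sequences
  set ζ : ℕ → ℝ := fun n => Nat.rec 0 (fun m _ => (m:ℝ) * gcv a b m * t ^ (m+1)) n with hζ
  set ξ : ℕ → ℝ := fun n => Nat.rec 0 (fun m _ => a * gcv a b m * t ^ (m+1)) n with hξ
  have hζ0 : ζ 0 = 0 := rfl
  have hξ0 : ξ 0 = 0 := rfl
  have hζs : ∀ m : ℕ, ζ (m+1) = (m:ℝ) * gcv a b m * t ^ (m+1) := fun m => rfl
  have hξs : ∀ m : ℕ, ξ (m+1) = a * gcv a b m * t ^ (m+1) := fun m => rfl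
  have hZ : HasSum ζ (t * (t * dv a b t)) := by
    have h2 := hη.mul_left t
    have hfe : (fun n : ℕ => ζ (n+1)) = (fun n : ℕ => t * ((n:ℝ) * gcv a b n * t ^ n)) := by
      funext n; rw [hζs]; ring
    have h3 : HasSum (fun n : ℕ => ζ (n+1)) (t * (t * dv a b t)) := by rw [hfe]; exact h2
    have h4 := (hasSum_nat_add_iff (f := ζ) 1).mp h3
    simpa [hζ0] using h4
  have hX : HasSum ξ (a * t * vv a b t) := by
    have h2 := hgc.mul_left (a * t)
    have hfe : (fun n : ℕ => ξ (n+1)) = (fun n : ℕ => a * t * (gcv a b n * t ^ n)) := by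
      funext n; rw [hξs]; ring
    have h3 : HasSum (fun n : ℕ => ξ (n+1)) (a * t * vv a b t) := by rw [hfe]; exact h2
    have h4 := (hasSum_nat_add_iff (f := ξ) 1).mp h3
    simpa [hξ0] using h4
  have hcomb : HasSum
      (fun n : ℕ => (n:ℝ) * gcv a b n * t ^ n - ζ n - ξ n
        + b * (gcv a b n * t ^ n) - b * (fc a b n * t ^ n))
      (t * dv a b t - t * (t * dv a b t) - a * t * vv a b t
        + b * vv a b t - b * uu a b t) :=
    (((hη.sub hZ).sub hX).add (hgc.mul_left b)).sub (hfc.mul_left b)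
  have hzero : ∀ n : ℕ, (n:ℝ) * gcv a b n * t ^ n - ζ n - ξ n
      + b * (gcv a b n * t ^ n) - b * (fc a b n * t ^ n) = 0 := by
    intro n
    match n with
    | 0 => simp [hζ0, hξ0, gcv_zero ha hb, fc_zero ha hb]
    | (m+1) =>
      rw [hζs, hξs]
      have hkey : ((m:ℝ)+1+b) * gcv a b (m+1) - ((m:ℝ)+a) * gcv a b m
          - b * fc a b (m+1) = 0 := by
        have hrec := fc_succ ha hb (a := a) (b := b) m
        rw [gcv, gcv]
        push_cast
        field_simp
        linear_combination hrec
      push_cast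
      linear_combination (t ^ (m+1)) * hkey
  rw [show (fun n : ℕ => (n:ℝ) * gcv a b n * t ^ n - ζ n - ξ n
        + b * (gcv a b n * t ^ n) - b * (fc a b n * t ^ n)) = (fun _ : ℕ => (0:ℝ))
      from funext hzero] at hcomb
  have h0 := hcomb.unique hasSum_zero
  linarith [h0]

lemma vv_pos {t : ℝ} (ht0 : 0 ≤ t) (ht : t < 1) : 0 < vv a b t :=
  lt_of_lt_of_le one_pos (vv_ge_one ha hb ht0 ht)

lemma uu_pos {t : ℝ} (ht0 : 0 ≤ t) (ht : t < 1) : 0 < uu a b t :=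
  lt_of_lt_of_le one_pos (uu_ge_one ha hb ht0 ht)

lemma du_eq {t : ℝ} (ht0 : 0 < t) (ht1 : t < 1) :
    du a b t = b * (vv a b t - uu a b t) / t := by
  rw [eq_div_iff ht0.ne']
  linear_combination rel1 ha hb (t := t) (by rw [abs_of_pos ht0]; exact ht1)

lemma dv_eq {t : ℝ} (ht0 : 0 < t) (ht1 : t < 1) :
    dv a b t = (a * t * vv a b t - b * vv a b t + b * uu a b t) / (t * (1 - t)) := by
  rw [eq_div_iff (mul_ne_zero ht0.ne' (by linarith : (1:ℝ) - t ≠ 0))]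
  linear_combination rel2 ha hb (t := t) (by rw [abs_of_pos ht0]; exact ht1)

/-- Riccati equation for `r = u/v`. -/
lemma hasDerivAt_ratio {t : ℝ} (ht0 : 0 < t) (ht1 : t < 1) :
    HasDerivAt (fun s => uu a b s / vv a b s)
      ((b*(1-t) - (a-b)*t*(uu a b t / vv a b t) - b*(uu a b t / vv a b t)^2)
        / (t*(1-t))) t := by
  have habs : |t| < 1 := by rw [abs_of_pos ht0]; exact ht1
  have hV := vv_pos ha hb ht0.le ht1
  have hd := (hasDerivAt_uu ha hb habs).div (hasDerivAt_vv ha hb habs) hV.ne'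
  refine hd.congr_deriv ?_
  rw [du_eq ha hb ht0 ht1, dv_eq ha hb ht0 ht1]
  have h1t : (1:ℝ) - t ≠ 0 := by linarith
  field_simp
  ring

/-- Riccati equation for `ρ = v/u`. -/
lemma hasDerivAt_ratio2 {t : ℝ} (ht0 : 0 < t) (ht1 : t < 1) :
    HasDerivAt (fun s => vv a b s / uu a b s)
      ((b + (a-b)*t*(vv a b t / uu a b t) - b*(1-t)*(vv a b t / uu a b t)^2)
        / (t*(1-t))) t := by
  have habs : |t| < 1 := by rw [abs_of_pos ht0]; exact ht1
  have hU := uu_pos ha hb ht0.le ht1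
  have hd := (hasDerivAt_vv ha hb habs).div (hasDerivAt_uu ha hb habs) hU.ne'
  refine hd.congr_deriv ?_
  rw [du_eq ha hb ht0 ht1, dv_eq ha hb ht0 ht1]
  have h1t : (1:ℝ) - t ≠ 0 := by linarith
  field_simp
  ring

end HG

end HGaux

set_option maxHeartbeats 1600000
namespace HGaux2

/-- Strict concavity inequality: `sinh(qw) < q sinh w` in exp form. -/
lemma sinh_ineq {w q : ℝ} (hw : 0 < w) (hq0 : 0 < q) (hq1 : q < 1) :
    Real.exp (q*w) - Real.exp (-(q*w)) < q * (Real.exp w - Real.exp (-w)) := by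
  set g : ℝ → ℝ := fun s =>
    s * (Real.exp w - Real.exp (-w)) - (Real.exp (s*w) - Real.exp (-(s*w))) with hg
  set g1 : ℝ → ℝ := fun s =>
    (Real.exp w - Real.exp (-w)) - (Real.exp (s*w) * w - Real.exp (-(s*w)) * (-w)) with hg1
  have hder : ∀ s : ℝ, HasDerivAt g (g1 s) s := by
    intro s
    have h1 : HasDerivAt (fun s : ℝ => s * (Real.exp w - Real.exp (-w)))
        (Real.exp w - Real.exp (-w)) s := hasDerivAt_mul_const _
    have h2 : HasDerivAt (fun s : ℝ => s * w) w s := hasDerivAt_mul_const w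
    have h3 : HasDerivAt (fun s : ℝ => Real.exp (s*w)) (Real.exp (s*w) * w) s :=
      h2.exp
    have h4 : HasDerivAt (fun s : ℝ => -(s*w)) (-w) s := h2.neg
    have h5 : HasDerivAt (fun s : ℝ => Real.exp (-(s*w))) (Real.exp (-(s*w)) * (-w)) s :=
      h4.exp
    exact h1.sub (h3.sub h5)
  have hderiv_g : deriv g = g1 := funext fun s => (hder s).deriv
  have hder1 : ∀ s : ℝ, HasDerivAt g1 (-(Real.exp (s*w) * w * w) + Real.exp (-(s*w)) * w * w) s := by
    intro s
    have h2 : HasDerivAt (fun s : ℝ => s * w) w s := hasDerivAt_mul_const w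
    have h3 : HasDerivAt (fun s : ℝ => Real.exp (s*w)) (Real.exp (s*w) * w) s :=
      h2.exp
    have h5 : HasDerivAt (fun s : ℝ => Real.exp (-(s*w))) (Real.exp (-(s*w)) * (-w)) s :=
      (h2.neg : HasDerivAt (fun s : ℝ => -(s*w)) (-w) s).exp
    have h6 : HasDerivAt (fun s : ℝ => Real.exp (s*w) * w) (Real.exp (s*w) * w * w) s :=
      h3.mul_const w
    have h7 : HasDerivAt (fun s : ℝ => Real.exp (-(s*w)) * (-w))
        ((Real.exp (-(s*w)) * (-w)) * (-w)) s := h5.mul_const (-w)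
    have h8 := (hasDerivAt_const s (Real.exp w - Real.exp (-w))).sub (h6.sub h7)
    refine h8.congr_deriv ?_
    ring
  have hconc : StrictConcaveOn ℝ (Set.Icc (0:ℝ) 1) g := by
    apply strictConcaveOn_of_deriv2_neg (convex_Icc 0 1)
    · exact Continuous.continuousOn (by fun_prop)
    · intro s hs
      rw [interior_Icc] at hs
      have : deriv^[2] g s = deriv g1 s := by
        rw [Function.iterate_succ, Function.iterate_one, Function.comp_apply, hderiv_g]
      rw [this, (hder1 s).deriv]
      have hsw : 0 < s * w := mul_pos hs.1 hw
      have h9 : Real.exp (-(s*w)) < Real.exp (s*w) := Real.exp_lt_exp.mpr (by linarith)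
      nlinarith [mul_pos (mul_pos (sub_pos.mpr h9) hw) hw]
  have h0 : g 0 = 0 := by simp [hg]
  have h1 : g 1 = 0 := by simp [hg]
  have hmem0 : (0:ℝ) ∈ Set.Icc (0:ℝ) 1 := by norm_num
  have hmem1 : (1:ℝ) ∈ Set.Icc (0:ℝ) 1 := by norm_num
  have h2 := hconc.2 hmem0 hmem1 (show (0:ℝ) ≠ 1 by norm_num)
    (show (0:ℝ) < 1 - q by linarith) hq0 (by ring)
  rw [h0, h1] at h2
  have hgq : 0 < g q := by
    have hq' : (1-q) • (0:ℝ) + q • (1:ℝ) = q := by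
      simp [smul_eq_mul]
    rw [hq'] at h2
    simpa using h2
  rw [hg] at hgq
  simp only at hgq
  linarith

/-- Key inequality: `x^((1-q)/2) - x^((1+q)/2) < q (1-x)` for `x, q ∈ (0,1)`. -/
lemma key_ineq {x q : ℝ} (hx0 : 0 < x) (hx1 : x < 1) (hq0 : 0 < q) (hq1 : q < 1) :
    x ^ ((1-q)/2) - x ^ ((1+q)/2) < q * (1 - x) := by
  set L : ℝ := Real.log x with hL
  have hLneg : L < 0 := Real.log_neg hx0 hx1
  set w : ℝ := -L/2 with hw
  have hwpos : 0 < w := by rw [hw]; linarith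
  have hxw : ∀ θ : ℝ, x ^ θ = Real.exp (L * θ) := by
    intro θ
    rw [Real.rpow_def_of_pos hx0]
  have e1 : x ^ ((1-q)/2) = Real.exp (-w) * Real.exp (q*w) := by
    rw [hxw, ← Real.exp_add]
    congr 1
    rw [hw]; ring
  have e2 : x ^ ((1+q)/2) = Real.exp (-w) * Real.exp (-(q*w)) := by
    rw [hxw, ← Real.exp_add]
    congr 1
    rw [hw]; ring
  have e3 : 1 - x = Real.exp (-w) * (Real.exp w - Real.exp (-w)) := by
    have hx : x = Real.exp (-w + -w) := by
      rw [← Real.exp_log hx0, ← hL]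
      congr 1
      rw [hw]; ring
    rw [hx, mul_sub, ← Real.exp_add, ← Real.exp_add]
    simp
  rw [e1, e2, e3]
  have hkey := sinh_ineq hwpos hq0 hq1
  have hexp : 0 < Real.exp (-w) := Real.exp_pos _
  nlinarith [hkey, hexp]

/-- derivative of `s ↦ (1-s)^w`. -/
lemma hasDerivAt_ombase (w : ℝ) {t : ℝ} (ht : t < 1) :
    HasDerivAt (fun s : ℝ => (1-s) ^ w) (-(w * (1-t) ^ (w-1))) t := by
  have h1 : HasDerivAt (fun s : ℝ => 1 - s) (-1) t := (hasDerivAt_id t).const_sub 1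
  have h2 : HasDerivAt (fun x : ℝ => x ^ w) (w * (1-t) ^ (w-1)) (1-t) :=
    Real.hasDerivAt_rpow_const (Or.inl (by linarith))
  have := h2.comp t h1
  refine this.congr_deriv ?_
  ring

/-- Comparison lemma: if `f 0 = 0` and `f' < 0` whenever `f ≥ 0`, then `f < 0` on `(0,1)`. -/
lemma neg_of_deriv_neg_when_nonneg {f : ℝ → ℝ}
    (hc : ContinuousOn f (Set.Ico 0 1)) (hf0 : f 0 = 0)
    (hd : ∀ t ∈ Set.Ioo (0:ℝ) 1, 0 ≤ f t → deriv f t < 0) :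
    ∀ t ∈ Set.Ioo (0:ℝ) 1, f t < 0 := by
  have main : ∀ t₁ ∈ Set.Ioo (0:ℝ) 1, ¬ (0 < f t₁) := by
    rintro t₁ ⟨ht₁0, ht₁1⟩ hpos
    have hsub : Set.Icc (0:ℝ) t₁ ⊆ Set.Ico (0:ℝ) 1 :=
      fun x hx => ⟨hx.1, lt_of_le_of_lt hx.2 ht₁1⟩
    have hccl : ContinuousOn f (Set.Icc 0 t₁) := hc.mono hsub
    set Z : Set ℝ := Set.Icc 0 t₁ ∩ f ⁻¹' (Set.Iic 0) with hZdef
    have h0Z : (0:ℝ) ∈ Z := ⟨⟨le_refl 0, ht₁0.le⟩, by simpa [Set.mem_preimage] using le_of_eq hf0⟩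
    have hZcl : IsClosed Z := hccl.preimage_isClosed_of_isClosed isClosed_Icc isClosed_Iic
    have hZbdd : BddAbove Z := ⟨t₁, fun x hx => hx.1.2⟩
    set m : ℝ := sSup Z with hm
    have hmZ : m ∈ Z := hZcl.csSup_mem ⟨0, h0Z⟩ hZbdd
    have hm0 : 0 ≤ m := hmZ.1.1
    have hmt : m ≤ t₁ := hmZ.1.2
    have hfm : f m ≤ 0 := hmZ.2
    have hgt : ∀ x, m < x → x ≤ t₁ → 0 < f x := by
      intro x hmx hxt
      by_contra hcon
      push_neg at hcon
      have : x ∈ Z := ⟨⟨le_trans hm0 hmx.le, hxt⟩, hcon⟩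
      exact absurd (le_csSup hZbdd this) (not_le.mpr hmx)
    have hmne : m ≠ t₁ := by
      intro h
      rw [h] at hfm
      linarith
    have hmlt : m < t₁ := lt_of_le_of_ne hmt hmne
    -- f m = 0 by right-continuity
    have hfm0 : f m = 0 := by
      refine le_antisymm hfm ?_
      have hcwa : ContinuousWithinAt f (Set.Ico 0 1) m :=
        hc m ⟨hm0, lt_of_le_of_lt hmt ht₁1⟩
      have hmem : Set.Ioc m t₁ ∈ nhdsWithin m (Set.Ioi m) :=
        Ioc_mem_nhdsGT_of_mem ⟨le_refl m, hmlt⟩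
      have htd : Tendsto f (nhdsWithin m (Set.Ioi m)) (nhds (f m)) := by
        apply hcwa.tendsto.mono_left
        apply nhdsWithin_le_of_mem
        exact Filter.mem_of_superset hmem
          (fun x hx => hsub ⟨le_trans hm0 hx.1.le, hx.2⟩)
      refine ge_of_tendsto htd ?_
      filter_upwards [hmem] with x hx
      exact (hgt x hx.1 hx.2).le
    have hanti : StrictAntiOn f (Set.Icc m t₁) := by
      apply strictAntiOn_of_deriv_neg (convex_Icc m t₁)
        (hccl.mono (Set.Icc_subset_Icc hm0 le_rfl))
      intro x hx
      rw [interior_Icc] at hx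
      exact hd x ⟨lt_of_le_of_lt hm0 hx.1, lt_trans hx.2 ht₁1⟩ (hgt x hx.1 hx.2.le).le
    have hlt := hanti (Set.left_mem_Icc.mpr hmlt.le) (Set.right_mem_Icc.mpr hmlt.le) hmlt
    rw [hfm0] at hlt
    linarith
  intro t ht
  rcases lt_trichotomy (f t) 0 with h|h|h
  · exact h
  · exfalso
    have hdt := hd t ht h.ge
    have hdiff : DifferentiableAt ℝ f t := by
      by_contra hnd
      rw [deriv_zero_of_not_differentiableAt hnd] at hdt
      linarith
    have hder : HasDerivAt f (deriv f t) t := hdiff.hasDerivAt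
    have hslope := hasDerivAt_iff_tendsto_slope.mp hder
    have hslope' : Tendsto (slope f t) (nhdsWithin t (Set.Iio t)) (nhds (deriv f t)) :=
      hslope.mono_left (nhdsWithin_mono t (fun x hx => ne_of_lt hx))
    have hev : ∀ᶠ x in nhdsWithin t (Set.Iio t), slope f t x < 0 :=
      hslope'.eventually_lt_const hdt
    have hev2 : Set.Ioo (0:ℝ) t ∈ nhdsWithin t (Set.Iio t) :=
      Ioo_mem_nhdsLT_of_mem ⟨ht.1, le_refl t⟩
    obtain ⟨x, hx1, hx2⟩ := (hev.and (eventually_of_mem hev2 (fun x hx => hx))).exists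
    have hxlt : x < t := hx2.2
    have hfx : 0 < f x := by
      rw [slope_def_field, h, sub_zero] at hx1
      rcases div_neg_iff.mp hx1 with ⟨h1, h2⟩ | ⟨h1, h2⟩
      · linarith
      · linarith
    exact main x ⟨hx2.1, lt_trans hxlt ht.2⟩ hfx
  · exact absurd h (main t ht)

end HGaux2

open HGaux HGaux2 in
theorem hypF_rpow_comparison (a b : ℝ) (ha : a ∈ Set.Ioo (0 : ℝ) 1) (hb : 0 < b)
    (p₀ : ℝ) (hp₀ : p₀ = a / (2 * b + 1)) :
    (a - b > 1/2 → ∀ t ∈ Set.Ioo (0 : ℝ) 1,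
      hypF a b (2 * b + 1) t < (1 - t) ^ p₀ * hypF a (b + 1) (2 * b + 1) t) ∧
    (a - b < 1/2 → ∀ t ∈ Set.Ioo (0 : ℝ) 1,
      hypF a b (2 * b + 1) t > (1 - t) ^ p₀ * hypF a (b + 1) (2 * b + 1) t) ∧
    (a - b = 1/2 → ∀ t ∈ Set.Ioo (0 : ℝ) 1,
      hypF a b (2 * b + 1) t = (1 - t) ^ p₀ * hypF a (b + 1) (2 * b + 1) t) := by
  obtain ⟨ha1, ha2⟩ := ha
  have hc : (0:ℝ) < 2*b+1 := by linarith
  set q : ℝ := (2*a - (2*b+1)) / (2*b+1) with hqdef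
  have hp : p₀ = (1+q)/2 := by
    rw [hp₀, hqdef]; field_simp; ring
  have hqlt1 : q < 1 := by
    rw [hqdef, div_lt_one hc]; linarith
  have hqgt : -1 < q := by
    rw [hqdef, lt_div_iff₀ hc]; linarith
  have habp : a - b - p₀ = b * q := by
    rw [hp₀, hqdef]; field_simp; ring
  -- E identity for the (r, φ) comparison
  have hEid : ∀ s ∈ Set.Ioo (0:ℝ) 1,
      s*(1-s)*(-(p₀*(1-s)^(p₀-1))) - (b*(1-s) - (a-b)*s*((1-s)^p₀) - b*((1-s)^p₀)^2)
        = b * (1-s)^p₀ * (q*s - ((1-s)^((1-q)/2) - (1-s)^p₀)) := by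
    rintro s ⟨hs0, hs1⟩
    have hx0 : (0:ℝ) < 1 - s := by linarith
    have f1 : (1-s)^(p₀-1) * (1-s) = (1-s)^p₀ := by
      rw [← Real.rpow_add_one hx0.ne']; norm_num
    have f3 : (1-s)^p₀ * (1-s)^((1-q)/2) = 1-s := by
      rw [← Real.rpow_add hx0, show p₀ + (1-q)/2 = 1 by rw [hp]; ring, Real.rpow_one]
    linear_combination (-(p₀*s))*f1 + (s*(1-s)^p₀)*habp + b*f3
  -- E identity for the (ρ, ψ) comparison
  have hE2id : ∀ s ∈ Set.Ioo (0:ℝ) 1,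
      s*(1-s)*(-((-p₀)*(1-s)^(-p₀-1)))
        - (b + (a-b)*s*((1-s)^(-p₀)) - b*(1-s)*((1-s)^(-p₀))^2)
        = b * (1-s)^(-p₀) * ((-q)*s - ((1-s)^((1+q)/2) - (1-s)^((1-q)/2))) := by
    rintro s ⟨hs0, hs1⟩
    have hx0 : (0:ℝ) < 1 - s := by linarith
    have g1 : (1-s)^(-p₀-1) * (1-s) = (1-s)^(-p₀) := by
      rw [← Real.rpow_add_one hx0.ne']; norm_num
    have g2 : (1-s)^(-p₀) * (1-s)^((1+q)/2) = 1 := by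
      rw [← Real.rpow_add hx0, show -p₀ + (1+q)/2 = 0 by rw [hp]; ring, Real.rpow_zero]
    have g3 : (1-s)^(-p₀) * (1-s)^((1-q)/2) = (1-s) * ((1-s)^(-p₀))^2 := by
      calc (1-s)^(-p₀) * (1-s)^((1-q)/2) = (1-s)^(-p₀ + (1-q)/2) :=
            (Real.rpow_add hx0 _ _).symm
        _ = (1-s)^((1:ℝ) + (-p₀ + -p₀)) := by
            rw [show -p₀ + (1-q)/2 = (1:ℝ) + (-p₀ + -p₀) by rw [hp]; ring]
        _ = (1-s)^(1:ℝ) * ((1-s)^(-p₀) * (1-s)^(-p₀)) := by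
            rw [Real.rpow_add hx0, Real.rpow_add hx0]
        _ = (1-s) * ((1-s)^(-p₀))^2 := by rw [Real.rpow_one, sq]
    linear_combination (p₀*s)*g1 + (-(s*(1-s)^(-p₀)))*habp + b*g2 + (-b)*g3
  -- continuity of the basic ratio minus rpow functions
  have hcont1 : ContinuousOn (fun s => uu a b s / vv a b s - (1-s)^p₀) (Set.Ico 0 1) := by
    intro s hs
    have habs : |s| < 1 := by rw [abs_of_nonneg hs.1]; exact hs.2
    exact ((((hasDerivAt_uu ha1 hb habs).continuousAt).div
      ((hasDerivAt_vv ha1 hb habs).continuousAt)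
      (vv_pos ha1 hb hs.1 hs.2).ne').sub
      (hasDerivAt_ombase p₀ hs.2).continuousAt).continuousWithinAt
  refine ⟨?_, ?_, ?_⟩
  · -- case a - b > 1/2
    intro hδ t ht
    obtain ⟨ht0, ht1⟩ := ht
    have hq0 : 0 < q := by
      rw [hqdef]; exact div_pos (by linarith) hc
    rw [hypF_eq_uu, hypF_eq_vv (hb := hb)]
    have hV := vv_pos ha1 hb ht0.le ht1
    set h : ℝ → ℝ := fun s => uu a b s / vv a b s - (1-s)^p₀ with hhdef
    have hneg : h t < 0 := by
      apply neg_of_deriv_neg_when_nonneg hcont1 ?_ ?_ t ⟨ht0, ht1⟩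
      · show uu a b 0 / vv a b 0 - (1-(0:ℝ))^p₀ = 0
        rw [uu_zero ha1 hb, vv_zero ha1 hb]
        norm_num [Real.one_rpow]
      · rintro s ⟨hs0, hs1⟩ hge
        have hdh := (hasDerivAt_ratio ha1 hb hs0 hs1).sub (hasDerivAt_ombase p₀ hs1)
        rw [show deriv h s = _ from hdh.deriv]
        have hx0 : (0:ℝ) < 1 - s := by linarith
        set R := uu a b s / vv a b s with hR
        set Φ := (1-s)^p₀ with hΦ
        have hΦpos : 0 < Φ := Real.rpow_pos_of_pos hx0 p₀
        have hRpos : 0 < R :=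
          div_pos (uu_pos ha1 hb hs0.le hs1) (vv_pos ha1 hb hs0.le hs1)
        have hge' : Φ ≤ R := by
          have : 0 ≤ R - Φ := hge
          linarith
        have hk := key_ineq (x := 1-s) hx0 (by linarith) hq0 hqlt1
        rw [show (1:ℝ)-(1-s) = s by ring, ← hp] at hk
        have hEpos : 0 < s*(1-s)*(-(p₀*(1-s)^(p₀-1)))
            - (b*(1-s) - (a-b)*s*Φ - b*Φ^2) := by
          rw [hEid s ⟨hs0, hs1⟩]
          exact mul_pos (mul_pos hb hΦpos) (by linarith)
        have hfrac : (b*(1-s) - (a-b)*s*R - b*R^2)/(s*(1-s)) - (-(p₀*(1-s)^(p₀-1)))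
            = ((b*(1-s) - (a-b)*s*R - b*R^2) - (b*(1-s) - (a-b)*s*Φ - b*Φ^2)
              - (s*(1-s)*(-(p₀*(1-s)^(p₀-1))) - (b*(1-s) - (a-b)*s*Φ - b*Φ^2)))
              / (s*(1-s)) := by
          field_simp
          all_goals ring
        rw [hfrac]
        apply div_neg_of_neg_of_pos
        · have t3 : 0 ≤ (a-b)*((R-Φ)*s) :=
            mul_nonneg (by linarith) (mul_nonneg (by linarith) hs0.le)
          have t4 : 0 ≤ b*((R-Φ)*(R+Φ)) :=
            mul_nonneg hb.le (mul_nonneg (by linarith) (by linarith))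
          nlinarith [t3, t4, hEpos]
        · exact mul_pos hs0 hx0
    have hlt : uu a b t / vv a b t < (1-t)^p₀ := by
      have := hneg
      rw [hhdef] at this
      linarith [this]
    exact (div_lt_iff₀ hV).mp hlt
  · -- case a - b < 1/2
    intro hδ t ht
    obtain ⟨ht0, ht1⟩ := ht
    have hq0 : q < 0 := by
      rw [hqdef]; exact div_neg_of_neg_of_pos (by linarith) hc
    rw [hypF_eq_uu, hypF_eq_vv (hb := hb)]
    have hV := vv_pos ha1 hb ht0.le ht1
    have hU := uu_pos ha1 hb ht0.le ht1
    rcases le_or_gt b a with hab | hab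
    · -- sub-case b ≤ a : use h = φ - r
      set h : ℝ → ℝ := fun s => (1-s)^p₀ - uu a b s / vv a b s with hhdef
      have hneg : h t < 0 := by
        apply neg_of_deriv_neg_when_nonneg ?_ ?_ ?_ t ⟨ht0, ht1⟩
        · intro s hs
          have habs : |s| < 1 := by rw [abs_of_nonneg hs.1]; exact hs.2
          exact ((hasDerivAt_ombase p₀ hs.2).continuousAt.sub
            (((hasDerivAt_uu ha1 hb habs).continuousAt).div
            ((hasDerivAt_vv ha1 hb habs).continuousAt)
            (vv_pos ha1 hb hs.1 hs.2).ne')).continuousWithinAt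
        · show (1-(0:ℝ))^p₀ - uu a b 0 / vv a b 0 = 0
          rw [uu_zero ha1 hb, vv_zero ha1 hb]
          norm_num [Real.one_rpow]
        · rintro s ⟨hs0, hs1⟩ hge
          have hdh := (hasDerivAt_ombase p₀ hs1).sub (hasDerivAt_ratio ha1 hb hs0 hs1)
          rw [show deriv h s = _ from hdh.deriv]
          have hx0 : (0:ℝ) < 1 - s := by linarith
          set R := uu a b s / vv a b s with hR
          set Φ := (1-s)^p₀ with hΦ
          have hΦpos : 0 < Φ := Real.rpow_pos_of_pos hx0 p₀
          have hRpos : 0 < R :=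
            div_pos (uu_pos ha1 hb hs0.le hs1) (vv_pos ha1 hb hs0.le hs1)
          have hge' : R ≤ Φ := by
            have : 0 ≤ Φ - R := hge
            linarith
          have hk := key_ineq (x := 1-s) hx0 (by linarith) (q := -q) (by linarith) (by linarith)
          rw [show (1:ℝ)-(1-s) = s by ring, show (1 - -q)/2 = (1+q)/2 by ring,
            show (1 + -q)/2 = (1-q)/2 by ring, ← hp] at hk
          have hEneg : s*(1-s)*(-(p₀*(1-s)^(p₀-1)))
              - (b*(1-s) - (a-b)*s*Φ - b*Φ^2) < 0 := by
            rw [hEid s ⟨hs0, hs1⟩]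
            apply mul_neg_of_pos_of_neg (mul_pos hb hΦpos)
            linarith
          have hfrac : (-(p₀*(1-s)^(p₀-1))) - (b*(1-s) - (a-b)*s*R - b*R^2)/(s*(1-s))
              = ((b*(1-s) - (a-b)*s*Φ - b*Φ^2) - (b*(1-s) - (a-b)*s*R - b*R^2)
                + (s*(1-s)*(-(p₀*(1-s)^(p₀-1))) - (b*(1-s) - (a-b)*s*Φ - b*Φ^2)))
                / (s*(1-s)) := by
            field_simp
            all_goals ring
            all_goals ring
          rw [hfrac]
          apply div_neg_of_neg_of_pos
          · have t3 : 0 ≤ (a-b)*((Φ-R)*s) :=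
              mul_nonneg (by linarith) (mul_nonneg (by linarith) hs0.le)
            have t4 : 0 ≤ b*((Φ-R)*(Φ+R)) :=
              mul_nonneg hb.le (mul_nonneg (by linarith) (by linarith))
            nlinarith [t3, t4, hEneg]
          · exact mul_pos hs0 hx0
      have hlt : (1-t)^p₀ < uu a b t / vv a b t := by
        rw [hhdef] at hneg
        simp only at hneg
        linarith
      exact (lt_div_iff₀ hV).mp hlt
    · -- sub-case a < b : use h = ρ - ψ
      set h : ℝ → ℝ := fun s => vv a b s / uu a b s - (1-s)^(-p₀) with hhdef
      have hneg : h t < 0 := by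
        apply neg_of_deriv_neg_when_nonneg ?_ ?_ ?_ t ⟨ht0, ht1⟩
        · intro s hs
          have habs : |s| < 1 := by rw [abs_of_nonneg hs.1]; exact hs.2
          exact ((((hasDerivAt_vv ha1 hb habs).continuousAt).div
            ((hasDerivAt_uu ha1 hb habs).continuousAt)
            (uu_pos ha1 hb hs.1 hs.2).ne').sub
            (hasDerivAt_ombase (-p₀) hs.2).continuousAt).continuousWithinAt
        · show vv a b 0 / uu a b 0 - (1-(0:ℝ))^(-p₀) = 0
          rw [uu_zero ha1 hb, vv_zero ha1 hb]
          norm_num [Real.one_rpow]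
        · rintro s ⟨hs0, hs1⟩ hge
          have hdh := (hasDerivAt_ratio2 ha1 hb hs0 hs1).sub (hasDerivAt_ombase (-p₀) hs1)
          rw [show deriv h s = _ from hdh.deriv]
          have hx0 : (0:ℝ) < 1 - s := by linarith
          set P := vv a b s / uu a b s with hP
          set Ψ := (1-s)^(-p₀) with hΨ
          have hΨpos : 0 < Ψ := Real.rpow_pos_of_pos hx0 (-p₀)
          have hPpos : 0 < P :=
            div_pos (vv_pos ha1 hb hs0.le hs1) (uu_pos ha1 hb hs0.le hs1)
          have hge' : Ψ ≤ P := by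
            have : 0 ≤ P - Ψ := hge
            linarith
          have hk := key_ineq (x := 1-s) hx0 (by linarith) (q := -q) (by linarith) (by linarith)
          rw [show (1:ℝ)-(1-s) = s by ring, show (1 - -q)/2 = (1+q)/2 by ring,
            show (1 + -q)/2 = (1-q)/2 by ring] at hk
          have hEpos : 0 < s*(1-s)*(-((-p₀)*(1-s)^(-p₀-1)))
              - (b + (a-b)*s*Ψ - b*(1-s)*Ψ^2) := by
            rw [hE2id s ⟨hs0, hs1⟩]
            exact mul_pos (mul_pos hb hΨpos) (by linarith)
          have hfrac : (b + (a-b)*s*P - b*(1-s)*P^2)/(s*(1-s)) - (-((-p₀)*(1-s)^(-p₀-1)))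
              = ((b + (a-b)*s*P - b*(1-s)*P^2) - (b + (a-b)*s*Ψ - b*(1-s)*Ψ^2)
                - (s*(1-s)*(-((-p₀)*(1-s)^(-p₀-1))) - (b + (a-b)*s*Ψ - b*(1-s)*Ψ^2)))
                / (s*(1-s)) := by
            field_simp
            all_goals ring
          rw [hfrac]
          apply div_neg_of_neg_of_pos
          · have t3 : 0 ≤ (b-a)*((P-Ψ)*s) :=
              mul_nonneg (by linarith) (mul_nonneg (by linarith) hs0.le)
            have t4 : 0 ≤ (b*(1-s))*((P-Ψ)*(P+Ψ)) :=
              mul_nonneg (mul_nonneg hb.le hx0.le) (mul_nonneg (by linarith) (by linarith))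
            nlinarith [t3, t4, hEpos]
          · exact mul_pos hs0 (by linarith)
      have hx0 : (0:ℝ) < 1 - t := by linarith
      have hΦpos : 0 < (1-t)^p₀ := Real.rpow_pos_of_pos hx0 p₀
      have hxpinv : (1-t)^(-p₀) = ((1-t)^p₀)⁻¹ := Real.rpow_neg hx0.le p₀
      have h5 : vv a b t / uu a b t < ((1-t)^p₀)⁻¹ := by
        rw [hhdef] at hneg
        simp only at hneg
        rw [← hxpinv]
        linarith
      have h6 : vv a b t < ((1-t)^p₀)⁻¹ * uu a b t := (div_lt_iff₀ hU).mp h5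
      have h7 := mul_lt_mul_of_pos_left h6 hΦpos
      rwa [← mul_assoc, mul_inv_cancel₀ hΦpos.ne', one_mul] at h7
  · -- case a - b = 1/2
    intro hδ t ht
    obtain ⟨ht0, ht1⟩ := ht
    have hq0 : q = 0 := by
      rw [hqdef, show 2*a - (2*b+1) = 0 by linarith, zero_div]
    rw [hypF_eq_uu, hypF_eq_vv (hb := hb)]
    have hV := vv_pos ha1 hb ht0.le ht1
    set h : ℝ → ℝ := fun s => uu a b s / vv a b s - (1-s)^p₀ with hhdef
    have hsub : Set.Icc (0:ℝ) t ⊆ Set.Ico (0:ℝ) 1 :=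
      fun x hx => ⟨hx.1, lt_of_le_of_lt hx.2 ht1⟩
    set H : ℝ → ℝ := fun s => h s * h s with hHdef
    have hder : ∀ x ∈ Set.Ioo (0:ℝ) t, HasDerivAt h
        ((b*(1-x) - (a-b)*x*(uu a b x / vv a b x) - b*(uu a b x / vv a b x)^2)/(x*(1-x))
          - (-(p₀*(1-x)^(p₀-1)))) x := by
      rintro x ⟨hx0, hx1⟩
      exact (hasDerivAt_ratio ha1 hb hx0 (lt_trans hx1 ht1)).sub
        (hasDerivAt_ombase p₀ (lt_trans hx1 ht1))
    have hant : AntitoneOn H (Set.Icc 0 t) := by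
      apply antitoneOn_of_deriv_nonpos (convex_Icc 0 t)
      · exact ((hcont1.mono hsub).mul (hcont1.mono hsub))
      · intro x hx
        rw [interior_Icc] at hx
        exact (((hder x hx).mul (hder x hx)).differentiableAt).differentiableWithinAt
      · intro x hx
        rw [interior_Icc] at hx
        obtain ⟨hx0, hxt⟩ := hx
        have hx1 : x < 1 := lt_trans hxt ht1
        have hxx : (0:ℝ) < 1 - x := by linarith
        have hdh := hder x ⟨hx0, hxt⟩
        have hdH := hdh.mul hdh
        rw [show deriv H x = _ from hdH.deriv]
        set R := uu a b x / vv a b x with hR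
        set Φ := (1-x)^p₀ with hΦ
        have hΦpos : 0 < Φ := Real.rpow_pos_of_pos hxx p₀
        have hRpos : 0 < R :=
          div_pos (uu_pos ha1 hb hx0.le hx1) (vv_pos ha1 hb hx0.le hx1)
        have hEval0 : x*(1-x)*(-(p₀*(1-x)^(p₀-1)))
            - (b*(1-x) - (a-b)*x*Φ - b*Φ^2) = 0 := by
          rw [hEid x ⟨hx0, hx1⟩, hq0]
          rw [show ((1:ℝ)-0)/2 = 1/2 by norm_num, show p₀ = 1/2 by rw [hp, hq0]; norm_num]
          ring
        have hfrac : (b*(1-x) - (a-b)*x*R - b*R^2)/(x*(1-x)) - (-(p₀*(1-x)^(p₀-1)))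
            = ((b*(1-x) - (a-b)*x*R - b*R^2) - (b*(1-x) - (a-b)*x*Φ - b*Φ^2)
              - (x*(1-x)*(-(p₀*(1-x)^(p₀-1))) - (b*(1-x) - (a-b)*x*Φ - b*Φ^2)))
              / (x*(1-x)) := by
          field_simp
          all_goals ring
        have hhx : h x = R - Φ := rfl
        have hab : a - b = 1/2 := hδ
        have hK : 0 ≤ (a-b)*x + b*(R+Φ) := by nlinarith
        have hDform : (b*(1-x) - (a-b)*x*R - b*R^2)/(x*(1-x)) - (-(p₀*(1-x)^(p₀-1)))
            = -((R-Φ) * (((a-b)*x + b*(R+Φ)) / (x*(1-x)))) := by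
          rw [hfrac, hEval0]
          field_simp
          ring
        rw [hDform, hhx]
        have h8 : 0 ≤ (R-Φ)^2 * (((a-b)*x + b*(R+Φ)) / (x*(1-x))) :=
          mul_nonneg (sq_nonneg _) (div_nonneg hK (by positivity))
        nlinarith [h8]
    have hH0 : H 0 = 0 := by
      show (uu a b 0 / vv a b 0 - (1-(0:ℝ))^p₀) * (uu a b 0 / vv a b 0 - (1-(0:ℝ))^p₀) = 0
      rw [uu_zero ha1 hb, vv_zero ha1 hb]
      norm_num [Real.one_rpow]
    have hHt := hant (Set.left_mem_Icc.mpr ht0.le) (Set.right_mem_Icc.mpr ht0.le) ht0.le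
    rw [hH0] at hHt
    have hHnn : 0 ≤ H t := mul_self_nonneg (h t)
    have hht0 : h t = 0 := mul_self_eq_zero.mp (le_antisymm hHt hHnn)
    rw [hhdef] at hht0
    simp only at hht0
    have : uu a b t / vv a b t = (1-t)^p₀ := by linarith
    rw [div_eq_iff hV.ne'] at this
    rw [this]
end

section
/- Let a ∈ (0,1), b > 0. Then 2F(-a,b;2b;t) - (1-t)F(1-a,b+1;2b+1;t) = F(1-a,b;2b+1;t) for all t ∈ (-1,1). -/
open Polynomial

lemma poch_zero (x : ℝ) : poch x 0 = 1 := by simp [poch]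

lemma poch_succ_right (x : ℝ) (n : ℕ) : poch x (n+1) = poch x n * (x + n) := by
  simp [poch, ascPochhammer_succ_right]

lemma poch_succ_left (x : ℝ) (n : ℕ) : poch x (n+1) = x * poch (x+1) n := by
  simp [poch, ascPochhammer_succ_left, eval_comp]

lemma poch_pos {x : ℝ} (hx : 0 < x) (n : ℕ) : 0 < poch x n := ascPochhammer_pos n x hx

lemma summable_aux (x y c t : ℝ) (hx : ∀ n : ℕ, |x + n| ≤ (n:ℝ) + 1)
    (hy : 0 < y) (hyc : y ≤ c) (ht : |t| < 1) :
    Summable (fun n : ℕ => poch x n * poch y n / poch c n * t ^ n / n.factorial) := by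
  set f : ℕ → ℝ := fun n => poch x n * poch y n / poch c n * t ^ n / n.factorial with hf
  have hc : 0 < c := lt_of_lt_of_le hy hyc
  have hbound : ∀ n, |f n| ≤ |t| ^ n := by
    intro n
    induction n with
    | zero => simp [hf, poch_zero]
    | succ n ih =>
      have hpc : (0:ℝ) < poch c n := poch_pos hc n
      have hcn : (0:ℝ) < c + n := by positivity
      have hfact : ((n.factorial : ℝ)) ≠ 0 := by positivity
      have hn1 : ((n:ℝ) + 1) ≠ 0 := by positivity
      have hstep : f (n+1) = f n * ((x + n) * ((y + n) / (c + n)) * (t / (n+1))) := by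
        simp only [hf, poch_succ_right, pow_succ, Nat.factorial_succ]
        push_cast
        field_simp [hpc.ne', hcn.ne', hfact, hn1]
      rw [hstep, abs_mul]
      have h1 : |(x + n) * ((y + n) / (c + n)) * (t / (n+1))| ≤ |t| := by
        rw [abs_mul, abs_mul]
        have hyn : |(y + n) / (c + n)| ≤ 1 := by
          rw [abs_div, abs_of_pos (by positivity), abs_of_pos (by positivity)]
          apply div_le_one_of_le₀ (by linarith) (by positivity)
        have habs : |((n:ℝ)+1)| = (n:ℝ)+1 := abs_of_pos (by positivity)
        have htn : |t / ((n:ℝ)+1)| ≤ |t| / ((n:ℝ)+1) := by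
          rw [abs_div, habs]
        calc |x + ↑n| * |(y + ↑n) / (c + ↑n)| * |t / (↑n + 1)|
            ≤ ((n:ℝ)+1) * 1 * (|t| / ((n:ℝ)+1)) := by
              apply mul_le_mul (mul_le_mul (hx n) hyn (abs_nonneg _) (by positivity)) htn
                (abs_nonneg _) (by positivity)
          _ = |t| := by field_simp
      calc |f n| * |(x + ↑n) * ((y + ↑n) / (c + ↑n)) * (t / (↑n + 1))|
          ≤ |t| ^ n * |t| := mul_le_mul ih h1 (abs_nonneg _) (by positivity)
        _ = |t| ^ (n+1) := (pow_succ _ _).symm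
  exact Summable.of_norm_bounded (summable_geometric_of_lt_one (abs_nonneg t) ht)
    (fun n => by simpa [Real.norm_eq_abs] using hbound n)

theorem hypF_combination_identity (a b : ℝ) (ha : a ∈ Set.Ioo (0 : ℝ) 1) (hb : 0 < b) :
    ∀ t ∈ Set.Ioo (-1 : ℝ) 1,
      2 * hypF (-a) b (2 * b) t - (1 - t) * hypF (1 - a) (b + 1) (2 * b + 1) t
        = hypF (1 - a) b (2 * b + 1) t := by
  obtain ⟨ha0, ha1⟩ := ha
  rintro t ⟨ht1, ht2⟩
  have ht : |t| < 1 := abs_lt.mpr ⟨ht1, ht2⟩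
  set f1 : ℕ → ℝ := fun n => poch (-a) n * poch b n / poch (2*b) n * t ^ n / n.factorial with hf1
  set f2 : ℕ → ℝ := fun n =>
    poch (1-a) n * poch (b+1) n / poch (2*b+1) n * t ^ n / n.factorial with hf2
  set f3 : ℕ → ℝ := fun n =>
    poch (1-a) n * poch b n / poch (2*b+1) n * t ^ n / n.factorial with hf3
  have S1 : Summable f1 := by
    apply summable_aux _ _ _ _ _ hb (by linarith) ht
    intro n
    rw [abs_le]
    constructor <;> linarith [Nat.cast_nonneg (α := ℝ) n]
  have S2 : Summable f2 := by
    apply summable_aux _ _ _ _ _ (by linarith) (by linarith) ht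
    intro n
    rw [abs_le]
    constructor <;> linarith [Nat.cast_nonneg (α := ℝ) n]
  have S3 : Summable f3 := by
    apply summable_aux _ _ _ _ _ hb (by linarith) ht
    intro n
    rw [abs_le]
    constructor <;> linarith [Nat.cast_nonneg (α := ℝ) n]
  -- shifted series
  set h : ℕ → ℝ := fun n => match n with | 0 => 0 | m+1 => t * f2 m with hh
  have Sh : Summable h := by
    apply (summable_nat_add_iff 1).mp
    exact S2.mul_left t
  have hsum : ∑' n, h n = t * ∑' n, f2 n := by
    rw [Summable.tsum_eq_zero_add Sh]
    simp only [hh]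
    rw [tsum_mul_left]
    simp
  -- termwise identity
  have key : ∀ n, 2 * f1 n - f2 n + h n = f3 n := by
    intro n
    match n with
    | 0 => simp [hf1, hf2, hf3, hh, poch_zero]; norm_num
    | n+1 =>
      have e1 : poch (-a) (n+1) = -a * poch (1-a) n := by
        rw [poch_succ_left, show -a+1 = 1-a by ring]
      have e2 : poch b (n+1) = b * poch (b+1) n := poch_succ_left b n
      have e3 : poch (2*b) (n+1) = 2*b * poch (2*b+1) n := poch_succ_left (2*b) n
      have e4 : poch (1-a) (n+1) = poch (1-a) n * (1-a+n) := poch_succ_right _ n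
      have e5 : poch (b+1) (n+1) = poch (b+1) n * (b+1+n) := poch_succ_right _ n
      have e6 : poch (2*b+1) (n+1) = poch (2*b+1) n * (2*b+1+n) := poch_succ_right _ n
      have hr : (0:ℝ) < poch (2*b+1) n := poch_pos (by linarith) n
      have hd1 : (2*b+1+(n:ℝ)) ≠ 0 := by positivity
      have hfact : ((n.factorial : ℝ)) ≠ 0 := by positivity
      have hn1 : ((n:ℝ) + 1) ≠ 0 := by positivity
      simp only [hf1, hf2, hf3, hh, e1, e2, e3, e4, e5, e6, pow_succ, Nat.factorial_succ]
      push_cast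
      field_simp [hr.ne', hd1, hfact, hn1, hb.ne']
      ring
  -- assemble
  have hcongr : ∑' n, f3 n = ∑' n, (2 * f1 n - f2 n + h n) := by
    exact tsum_congr fun n => (key n).symm
  have hsplit : ∑' n, (2 * f1 n - f2 n + h n)
      = (2 * ∑' n, f1 n - ∑' n, f2 n) + ∑' n, h n := by
    rw [Summable.tsum_add ((S1.mul_left 2).sub S2) Sh,
      Summable.tsum_sub (S1.mul_left 2) S2, tsum_mul_left]
  show 2 * hypF (-a) b (2 * b) t - (1 - t) * hypF (1 - a) (b + 1) (2 * b + 1) t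
        = hypF (1 - a) b (2 * b + 1) t
  rw [hypF, hypF, hypF]
  have : (∑' n : ℕ, poch (1-a) n * poch b n / poch (2*b+1) n * t ^ n / n.factorial)
      = ∑' n, f3 n := rfl
  rw [this, hcongr, hsplit, hsum]
  ring
end
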